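/- arXiv:math/0701300 — 7 statements merged into one kernel-verified Lean document; each statement's English description precedes it below -/
import Mathlib

section
/- Let θ be irrational and M a positive integer. Write the incoming partition P^in_θ(M) = (a₁,…,a_k). Then ∑_{i=1}^k ⌈aᵢθ⌉ = ⌈Mθ⌉. -/
open scoped Classical
open Finset

/-- The next (largest) entry of the incoming partition: the largest `a ∈ {1,…,M}`
such that `⌈aθ⌉/a < ⌈a'θ⌉/a'` for all `a' ∈ {1,…,a−1}`. -/
noncomputable def pinStep (θ : ℝ) (M : ℕ) : ℕ :=
  WithBot.unbotD 0 (((Finset.Icc 1 M).filter (fun a : ℕ => ∀ a' ∈ Finset.Ico 1 a,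
      ((⌈(a : ℝ) * θ⌉ : ℤ) : ℝ) / (a : ℝ) < ((⌈(a' : ℝ) * θ⌉ : ℤ) : ℝ) / (a' : ℝ))).max)

/-- Fuel-based recursion computing the incoming partition `P^in_θ(M)`. -/
noncomputable def pinListAux (θ : ℝ) : ℕ → ℕ → List ℕ
  | 0, _ => []
  | fuel + 1, M =>
      if M = 0 then [] else pinStep θ M :: pinListAux θ fuel (M - pinStep θ M)

/-- The incoming partition `P^in_θ(M)`, listed in the order produced by the recursion
(which is nonincreasing). -/
noncomputable def pinList (θ : ℝ) (M : ℕ) : List ℕ := pinListAux θ M M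

/-- The outgoing partition `P^out_θ(M) := P^in_{−θ}(M)`. -/
noncomputable def poutList (θ : ℝ) (M : ℕ) : List ℕ := pinList (-θ) M

namespace PinAux

/-- fractional defect -/
noncomputable def F (θ : ℝ) (n : ℕ) : ℝ := (⌈(n : ℝ) * θ⌉ : ℤ) - n * θ

lemma ceil_eq (θ : ℝ) (n : ℕ) : ((⌈(n : ℝ) * θ⌉ : ℤ) : ℝ) = n * θ + F θ n := by
  simp [F]

lemma F_pos (θ : ℝ) (hθ : Irrational θ) {n : ℕ} (hn : 1 ≤ n) : 0 < F θ n := by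
  have hirr : Irrational ((n : ℝ) * θ) := hθ.natCast_mul (by omega)
  have h1 : (n : ℝ) * θ ≤ (⌈(n : ℝ) * θ⌉ : ℤ) := Int.le_ceil _
  have h2 : (n : ℝ) * θ ≠ ((⌈(n : ℝ) * θ⌉ : ℤ) : ℝ) := hirr.ne_int _
  have : (n : ℝ) * θ < (⌈(n : ℝ) * θ⌉ : ℤ) := lt_of_le_of_ne h1 h2
  simpa [F] using sub_pos.mpr this

lemma F_lt_one (θ : ℝ) (n : ℕ) : F θ n < 1 := by
  have := Int.ceil_lt_add_one ((n : ℝ) * θ)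
  simp only [F]
  linarith

lemma F_strict (θ : ℝ) (hθ : Irrational θ) {m n : ℕ} (hmn : m < n) (h : F θ m ≤ F θ n) :
    F θ m < F θ n := by
  rcases lt_or_eq_of_le h with h' | h'
  · exact h'
  · exfalso
    have hirr : Irrational (((n - m : ℕ) : ℝ) * θ) := hθ.natCast_mul (by omega)
    have hc : ((n - m : ℕ) : ℝ) = (n : ℝ) - m := by
      push_cast [Nat.cast_sub hmn.le]; ring
    have : ((n - m : ℕ) : ℝ) * θ = ((⌈(n : ℝ) * θ⌉ - ⌈(m : ℝ) * θ⌉ : ℤ) : ℝ) := by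
      have := h'
      simp only [F] at this
      push_cast [hc]
      linarith
    exact hirr.ne_int _ this

/-- key ceiling additivity -/
lemma ceil_split (θ : ℝ) (hθ : Irrational θ) {a M : ℕ} (ha : 1 ≤ a) (haM : a < M)
    (h : F θ a < F θ M) :
    ⌈(M : ℝ) * θ⌉ = ⌈(a : ℝ) * θ⌉ + ⌈((M - a : ℕ) : ℝ) * θ⌉ := by
  set k : ℤ := ⌈((M - a : ℕ) : ℝ) * θ⌉ - ⌈(M : ℝ) * θ⌉ + ⌈(a : ℝ) * θ⌉ with hk
  have hc : ((M - a : ℕ) : ℝ) = (M : ℝ) - a := by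
    push_cast [Nat.cast_sub haM.le]; ring
  have hkval : (k : ℝ) = F θ (M - a) - (F θ M - F θ a) := by
    simp only [F, hk]
    push_cast [hc]
    ring
  have h1 : 0 < F θ (M - a) := F_pos θ hθ (by omega)
  have h2 : F θ (M - a) < 1 := F_lt_one θ _
  have h3 : 0 < F θ M - F θ a := sub_pos.mpr h
  have h4 : F θ M - F θ a < 1 := by
    have := F_pos θ hθ ha
    have := F_lt_one θ M
    linarith
  have : k = 0 := by
    have hlt : (k : ℝ) < 1 := by rw [hkval]; linarith
    have hgt : (-1 : ℝ) < k := by rw [hkval]; linarith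
    have h5 : k < 1 := by exact_mod_cast hlt
    have h6 : -1 < k := by exact_mod_cast hgt
    omega
  omega

/-- the record predicate used in `pinStep` -/
def Rec (θ : ℝ) (a : ℕ) : Prop :=
  ∀ a' ∈ Finset.Ico 1 a,
    ((⌈(a : ℝ) * θ⌉ : ℤ) : ℝ) / (a : ℝ) < ((⌈(a' : ℝ) * θ⌉ : ℤ) : ℝ) / (a' : ℝ)

lemma rec_iff_F (θ : ℝ) {a m : ℕ} (ha : 1 ≤ a) (hm : 1 ≤ m) :
    (((⌈(a : ℝ) * θ⌉ : ℤ) : ℝ) / (a : ℝ) < ((⌈(m : ℝ) * θ⌉ : ℤ) : ℝ) / (m : ℝ))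
      ↔ F θ a / a < F θ m / m := by
  have hma : (0 : ℝ) < m := by exact_mod_cast hm
  have haa : (0 : ℝ) < a := by exact_mod_cast ha
  rw [ceil_eq, ceil_eq]
  constructor <;> intro h
  · have := h
    rw [div_lt_div_iff₀ haa hma] at this ⊢
    nlinarith
  · rw [div_lt_div_iff₀ haa hma] at h ⊢
    nlinarith

/-- ratio-record implies F-record -/
lemma rec_F_record (θ : ℝ) (hθ : Irrational θ) {a : ℕ} (ha : 1 ≤ a) (hrec : Rec θ a) :
    ∀ m, 1 ≤ m → m < a → F θ a < F θ m := by
  intro m hm hma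
  by_contra hcon
  push_neg at hcon
  have hlt : F θ m < F θ a := F_strict θ hθ hma hcon
  -- F (a - m) = F a - F m
  have hc : ((a - m : ℕ) : ℝ) = (a : ℝ) - m := by
    push_cast [Nat.cast_sub hma.le]; ring
  have hsub : F θ (a - m) = F θ a - F θ m := by
    set k : ℤ := ⌈((a - m : ℕ) : ℝ) * θ⌉ - ⌈(a : ℝ) * θ⌉ + ⌈(m : ℝ) * θ⌉ with hk
    have hkval : (k : ℝ) = F θ (a - m) - (F θ a - F θ m) := by
      simp only [F, hk]; push_cast [hc]; ring
    have h1 : 0 < F θ (a - m) := F_pos θ hθ (by omega)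
    have h2 : F θ (a - m) < 1 := F_lt_one θ _
    have h3 : 0 < F θ a - F θ m := sub_pos.mpr hlt
    have h4 : F θ a - F θ m < 1 := by
      have := F_pos θ hθ hm; have := F_lt_one θ a; linarith
    have : k = 0 := by
      have hlt1 : (k : ℝ) < 1 := by rw [hkval]; linarith
      have hgt : (-1 : ℝ) < k := by rw [hkval]; linarith
      have : k < 1 := by exact_mod_cast hlt1
      have : -1 < k := by exact_mod_cast hgt
      omega
    have : (k : ℝ) = 0 := by exact_mod_cast this
    linarith [hkval ▸ this]
  -- apply record at a - m and at m
  have h1 : F θ a / a < F θ (a - m) / (a - m : ℕ) := by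
    rw [← rec_iff_F θ ha (by omega)]
    exact hrec _ (Finset.mem_Ico.mpr ⟨by omega, by omega⟩)
  have h2 : F θ a / a < F θ m / m := by
    rw [← rec_iff_F θ ha hm]
    exact hrec _ (Finset.mem_Ico.mpr ⟨hm, hma⟩)
  have hma' : (0 : ℝ) < m := by exact_mod_cast hm
  have haa : (0 : ℝ) < a := by exact_mod_cast ha
  have hamr : ((a - m : ℕ) : ℝ) = (a : ℝ) - m := hc
  have hampos : (0 : ℝ) < ((a - m : ℕ) : ℝ) := by
    rw [hamr]
    have h7 : (m : ℝ) < a := by exact_mod_cast hma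
    linarith
  rw [hsub, div_lt_div_iff₀ haa hampos] at h1
  rw [div_lt_div_iff₀ haa hma'] at h2
  rw [hamr] at h1
  nlinarith

/-- the filter set in pinStep -/
noncomputable def S (θ : ℝ) (M : ℕ) : Finset ℕ :=
  (Finset.Icc 1 M).filter (fun a : ℕ => ∀ a' ∈ Finset.Ico 1 a,
      ((⌈(a : ℝ) * θ⌉ : ℤ) : ℝ) / (a : ℝ) < ((⌈(a' : ℝ) * θ⌉ : ℤ) : ℝ) / (a' : ℝ))

lemma mem_S (θ : ℝ) {M b : ℕ} : b ∈ S θ M ↔ (1 ≤ b ∧ b ≤ M) ∧ Rec θ b := by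
  unfold S Rec
  simp [Finset.mem_filter, Finset.mem_Icc]

lemma S_nonempty (θ : ℝ) {M : ℕ} (hM : 1 ≤ M) : (S θ M).Nonempty := by
  refine ⟨1, (mem_S θ).mpr ⟨⟨le_refl 1, hM⟩, ?_⟩⟩
  intro a' ha'
  simp only [Finset.mem_Ico] at ha'
  exfalso; omega

lemma filter_eq_S (θ : ℝ) (M : ℕ)
    (inst : ∀ a : ℕ, Decidable (∀ a' ∈ Finset.Ico 1 a,
      ((⌈(a : ℝ) * θ⌉ : ℤ) : ℝ) / (a : ℝ) < ((⌈(a' : ℝ) * θ⌉ : ℤ) : ℝ) / (a' : ℝ))) :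
    @Finset.filter ℕ _ inst (Finset.Icc 1 M) = S θ M := by
  unfold S
  congr!

lemma pinStep_eq (θ : ℝ) {M : ℕ} (hM : 1 ≤ M) :
    pinStep θ M = (S θ M).max' (S_nonempty θ hM) := by
  unfold pinStep
  rw [filter_eq_S θ M _, ← Finset.coe_max' (S_nonempty θ hM)]
  rfl

lemma pinStep_mem (θ : ℝ) {M : ℕ} (hM : 1 ≤ M) : pinStep θ M ∈ S θ M := by
  rw [pinStep_eq θ hM]; exact Finset.max'_mem _ _

lemma pinStep_le_max (θ : ℝ) {M : ℕ} (hM : 1 ≤ M) {b : ℕ} (hb : b ∈ S θ M) :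
    b ≤ pinStep θ M := by
  rw [pinStep_eq θ hM]; exact Finset.le_max' _ _ hb

/-- F θ a < F θ n for all a < n ≤ M, where a = pinStep θ M -/
lemma chain (θ : ℝ) (hθ : Irrational θ) {M : ℕ} (hM : 1 ≤ M) :
    ∀ n, pinStep θ M < n → n ≤ M → F θ (pinStep θ M) < F θ n := by
  set a := pinStep θ M with hadef
  have hmem := pinStep_mem θ hM
  rw [mem_S] at hmem
  obtain ⟨⟨ha1, haM⟩, hrec⟩ := hmem
  have hFrec := rec_F_record θ hθ ha1 hrec
  intro n
  induction n using Nat.strong_induction_on with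
  | _ n ih =>
    intro han hnM
    -- n is not a ratio record (else contradicts maximality)
    have hnotrec : ¬ (∀ a' ∈ Finset.Ico 1 n,
        ((⌈(n : ℝ) * θ⌉ : ℤ) : ℝ) / (n : ℝ) < ((⌈(a' : ℝ) * θ⌉ : ℤ) : ℝ) / (a' : ℝ)) := by
      intro hr
      have : n ∈ S θ M := (mem_S θ).mpr ⟨⟨by omega, hnM⟩, hr⟩
      have := pinStep_le_max θ hM this
      omega
    push_neg at hnotrec
    obtain ⟨m, hmIco, hmle⟩ := hnotrec
    rw [Finset.mem_Ico] at hmIco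
    obtain ⟨hm1, hmn⟩ := hmIco
    -- from ¬(F n/n < F m/m) get F m/m ≤ F n/n, hence F m < F n
    have hnle : F θ m / m ≤ F θ n / n := by
      by_contra h
      push_neg at h
      exact absurd hmle (not_le.mpr ((rec_iff_F θ (by omega) hm1).mpr h))
    have hmpos : (0 : ℝ) < m := by exact_mod_cast hm1
    have hn1 : 1 ≤ n := by omega
    have hnpos : (0 : ℝ) < n := by exact_mod_cast hn1
    have hFnpos : 0 < F θ n := F_pos θ hθ (by omega)
    have hmnR : (m : ℝ) < n := by exact_mod_cast hmn
    have hFmn : F θ m < F θ n := by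
      have h1 : F θ m ≤ m * (F θ n / n) := by
        calc F θ m = m * (F θ m / m) := by field_simp
        _ ≤ m * (F θ n / n) := by
            exact mul_le_mul_of_nonneg_left hnle (le_of_lt hmpos)
      have h2 : m * (F θ n / n) < n * (F θ n / n) := by
        apply mul_lt_mul_of_pos_right hmnR
        positivity
      have h3 : n * (F θ n / n) = F θ n := by field_simp
      linarith
    rcases lt_trichotomy m a with hma | hma | hma
    · exact lt_trans (hFrec m hm1 hma) hFmn
    · rw [← hma]; exact hFmn
    · exact lt_trans (ih m hmn hma (by omega)) hFmn

lemma pinStep_bounds (θ : ℝ) {M : ℕ} (hM : 1 ≤ M) :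
    1 ≤ pinStep θ M ∧ pinStep θ M ≤ M := by
  have := pinStep_mem θ hM
  rw [mem_S] at this
  exact this.1

lemma step_ceil (θ : ℝ) (hθ : Irrational θ) {M : ℕ} (hM : 1 ≤ M) :
    ⌈(M : ℝ) * θ⌉ = ⌈((pinStep θ M : ℕ) : ℝ) * θ⌉ + ⌈(((M - pinStep θ M : ℕ)) : ℝ) * θ⌉ := by
  obtain ⟨ha1, haM⟩ := pinStep_bounds θ hM
  rcases eq_or_lt_of_le haM with heq | hlt
  · rw [heq]
    simp
  · have hF : F θ (pinStep θ M) < F θ M := chain θ hθ hM M hlt (le_refl M)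
    exact ceil_split θ hθ ha1 hlt hF

lemma sum_aux (θ : ℝ) (hθ : Irrational θ) :
    ∀ fuel M, M ≤ fuel →
      ((pinListAux θ fuel M).map (fun a => ⌈(a : ℝ) * θ⌉)).sum = ⌈(M : ℝ) * θ⌉ := by
  intro fuel
  induction fuel with
  | zero =>
    intro M hM
    have : M = 0 := by omega
    subst this
    simp [pinListAux]
  | succ f ih =>
    intro M hM
    by_cases h0 : M = 0
    · subst h0
      simp [pinListAux]
    · have hM1 : 1 ≤ M := by omega
      obtain ⟨ha1, haM⟩ := pinStep_bounds θ hM1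
      rw [pinListAux, if_neg h0]
      rw [show ((pinStep θ M :: pinListAux θ f (M - pinStep θ M)).map
          (fun a => ⌈(a : ℝ) * θ⌉)).sum
        = ⌈((pinStep θ M : ℕ) : ℝ) * θ⌉
          + ((pinListAux θ f (M - pinStep θ M)).map (fun a => ⌈(a : ℝ) * θ⌉)).sum from by
        simp]
      rw [ih (M - pinStep θ M) (by omega)]
      exact (step_ceil θ hθ hM1).symm

end PinAux

/-- the sum of `⌈aᵢθ⌉` over the incoming partition of `M` is `⌈Mθ⌉`. -/
theorem pin_sum_ceil (θ : ℝ) (hθ : Irrational θ) (M : ℕ) (hM : 1 ≤ M) :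
    ((pinList θ M).map (fun a => ⌈(a : ℝ) * θ⌉)).sum = ⌈(M : ℝ) * θ⌉ :=
  PinAux.sum_aux θ hθ M M (le_refl M)
end

section
/- Let θ be irrational and M a positive integer. The entries of the incoming partition P^in_θ(M) are exactly the horizontal displacements of the successive segments between lattice points of the lowest convex polygonal path Λ^in_θ(M) that starts at (0,0), ends at (M,⌈Mθ⌉), stays above the line y = θx, and has corners at lattice points. -/
open scoped Classical
open Finset

noncomputable def sl (θ : ℝ) (b : ℕ) : ℝ := ((⌈(b : ℝ) * θ⌉ : ℤ) : ℝ) / (b : ℝ)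

lemma pinStep_spec (θ : ℝ) (M : ℕ) (hM : 1 ≤ M) :
    (1 ≤ pinStep θ M ∧ pinStep θ M ≤ M) ∧
    (∀ a' : ℕ, 1 ≤ a' → a' < pinStep θ M → sl θ (pinStep θ M) < sl θ a') ∧
    (∀ x : ℕ, 1 ≤ x → x ≤ M → (∀ a' : ℕ, 1 ≤ a' → a' < x → sl θ x < sl θ a')
       → x ≤ pinStep θ M) := by
  classical
  set F := ((Finset.Icc 1 M).filter (fun a : ℕ => ∀ a' ∈ Finset.Ico 1 a,
      ((⌈(a : ℝ) * θ⌉ : ℤ) : ℝ) / (a : ℝ) < ((⌈(a' : ℝ) * θ⌉ : ℤ) : ℝ) / (a' : ℝ))) with hF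
  have hmemF : ∀ x : ℕ, x ∈ F ↔ (1 ≤ x ∧ x ≤ M) ∧
      (∀ a' : ℕ, 1 ≤ a' → a' < x → sl θ x < sl θ a') := by
    intro x
    simp only [hF, Finset.mem_filter, Finset.mem_Icc, Finset.mem_Ico, sl]
    tauto
  have h1 : (1 : ℕ) ∈ F := (hmemF 1).2 ⟨⟨le_refl 1, hM⟩, fun a' h h' => by omega⟩
  have hne : F.Nonempty := ⟨1, h1⟩
  have hps : pinStep θ M = F.max' hne := by
    have : pinStep θ M = WithBot.unbotD 0 (F.max) := rfl
    rw [this, ← Finset.coe_max' hne, WithBot.unbotD_coe]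
  have hmem : pinStep θ M ∈ F := hps ▸ Finset.max'_mem F hne
  rw [hmemF] at hmem
  exact ⟨hmem.1, hmem.2, fun x h1x hxM hprop =>
    hps ▸ Finset.le_max' F x ((hmemF x).2 ⟨⟨h1x, hxM⟩, hprop⟩)⟩

lemma pinStep_min (θ : ℝ) (M : ℕ) (hM : 1 ≤ M) :
    ∀ b : ℕ, 1 ≤ b → b ≤ M → sl θ (pinStep θ M) ≤ sl θ b := by
  classical
  obtain ⟨⟨ha1, haM⟩, hstrict, hmax⟩ := pinStep_spec θ M hM
  set a := pinStep θ M
  set T := Finset.Icc 1 M with hT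
  have hTne : T.Nonempty := ⟨1, by simp [hT, hM]⟩
  obtain ⟨c0, hc0T, hc0⟩ := Finset.exists_min_image T (sl θ) hTne
  set U := T.filter (fun b => ∀ x ∈ T, sl θ b ≤ sl θ x) with hU
  have hUne : U.Nonempty := ⟨c0, Finset.mem_filter.2 ⟨hc0T, hc0⟩⟩
  set c := U.min' hUne with hc
  have hcU : c ∈ U := Finset.min'_mem U hUne
  obtain ⟨hcT, hcmin⟩ := Finset.mem_filter.1 hcU
  obtain ⟨hc1, hcM⟩ := Finset.mem_Icc.1 hcT
  have hca : c ≤ a := by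
    apply hmax c hc1 hcM
    intro a' h1 h2
    have ha'T : a' ∈ T := Finset.mem_Icc.2 ⟨h1, by omega⟩
    rcases lt_or_ge (sl θ c) (sl θ a') with h | h
    · exact h
    · exfalso
      have heq : sl θ a' = sl θ c := le_antisymm h (hcmin a' ha'T)
      have ha'U : a' ∈ U := Finset.mem_filter.2 ⟨ha'T, fun x hx => heq ▸ hcmin x hx⟩
      have := Finset.min'_le U a' ha'U
      omega
  rcases eq_or_lt_of_le hca with h | h
  · intro b hb1 hbM
    exact h ▸ hcmin b (Finset.mem_Icc.2 ⟨hb1, hbM⟩)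
  · exfalso
    have h1 : sl θ a < sl θ c := hstrict c hc1 h
    have h2 : sl θ c ≤ sl θ a := hcmin a (Finset.mem_Icc.2 ⟨ha1, haM⟩)
    linarith

lemma ceil_gt (θ : ℝ) (hθ : Irrational θ) (n : ℤ) (hn : n ≠ 0) :
    (n : ℝ) * θ < (⌈(n : ℝ) * θ⌉ : ℝ) := by
  have hirr : Irrational ((n : ℝ) * θ) := (hθ.intCast_mul hn)
  rcases lt_or_eq_of_le (Int.le_ceil ((n:ℝ)*θ)) with h | h
  · exact h
  · exact absurd ⟨⌈(n:ℝ)*θ⌉, h.symm⟩ hirr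

lemma ceil_add_of_min (θ : ℝ) (hθ : Irrational θ) (M a b : ℕ)
    (ha1 : 1 ≤ a) (hb1 : 1 ≤ b) (hab : a + b ≤ M)
    (hmin : ∀ x : ℕ, 1 ≤ x → x ≤ M → sl θ a ≤ sl θ x) :
    ⌈((a + b : ℕ) : ℝ) * θ⌉ = ⌈(a : ℝ) * θ⌉ + ⌈(b : ℝ) * θ⌉ := by
  set εa : ℝ := (⌈(a : ℝ) * θ⌉ : ℝ) - (a : ℝ) * θ with hεa
  set εb : ℝ := (⌈(b : ℝ) * θ⌉ : ℝ) - (b : ℝ) * θ with hεb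
  have hapos : (0:ℝ) < a := by exact_mod_cast ha1
  have hbpos : (0:ℝ) < b := by exact_mod_cast hb1
  have hεa0 : 0 < εa := by
    have := ceil_gt θ hθ (a : ℤ) (by exact_mod_cast (by omega : a ≠ 0))
    push_cast at this ⊢; linarith
  have hεb0 : 0 < εb := by
    have := ceil_gt θ hθ (b : ℤ) (by exact_mod_cast (by omega : b ≠ 0))
    push_cast at this ⊢; linarith
  have hεa1 : εa < 1 := by
    have := Int.ceil_lt_add_one ((a : ℝ) * θ); linarith
  have hεb1 : εb < 1 := by
    have := Int.ceil_lt_add_one ((b : ℝ) * θ); linarith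
  have hirrab : Irrational (((a + b : ℕ) : ℝ) * θ) :=
    hθ.natCast_mul (m := a + b) (by omega)
  have hs1 : εa + εb ≠ 1 := by
    intro h
    apply hirrab.ne_int (⌈(a : ℝ) * θ⌉ + ⌈(b : ℝ) * θ⌉ - 1)
    push_cast
    linarith
  rcases lt_or_gt_of_ne hs1 with hlt | hgt
  · rw [Int.ceil_eq_iff]
    constructor
    · push_cast; linarith
    · push_cast; linarith
  · exfalso
    have hceil : ⌈((a + b : ℕ) : ℝ) * θ⌉ = ⌈(a : ℝ) * θ⌉ + ⌈(b : ℝ) * θ⌉ - 1 := by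
      rw [Int.ceil_eq_iff]
      constructor
      · push_cast; linarith
      · push_cast; linarith
    have := hmin (a + b) (by omega) hab
    rw [sl, sl, hceil, div_le_div_iff₀ hapos (by push_cast; linarith)] at this
    push_cast at this
    nlinarith

lemma pinListAux_fuel (θ : ℝ) (hpos : ∀ M : ℕ, 1 ≤ M → 1 ≤ pinStep θ M) :
    ∀ M f f', M ≤ f → M ≤ f' → pinListAux θ f M = pinListAux θ f' M := by
  intro M
  induction M using Nat.strong_induction_on with
  | _ M ih =>
    intro f f' hf hf'
    rcases Nat.eq_zero_or_pos M with hM | hM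
    · subst hM
      cases f <;> cases f' <;> simp [pinListAux]
    · obtain ⟨g, rfl⟩ : ∃ g, f = g + 1 := ⟨f - 1, by omega⟩
      obtain ⟨g', rfl⟩ : ∃ g', f' = g' + 1 := ⟨f' - 1, by omega⟩
      have hstep := hpos M hM
      simp only [pinListAux, if_neg (by omega : M ≠ 0)]
      rw [ih (M - pinStep θ M) (by omega) g g' (by omega) (by omega)]

lemma pinList_cons (θ : ℝ) (M : ℕ) (hM : 1 ≤ M) :
    pinList θ M = pinStep θ M :: pinList θ (M - pinStep θ M) := by
  have hpos : ∀ M : ℕ, 1 ≤ M → 1 ≤ pinStep θ M := fun M h => (pinStep_spec θ M h).1.1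
  have h1 : pinList θ M = pinListAux θ M M := rfl
  obtain ⟨g, hg⟩ : ∃ g, M = g + 1 := ⟨M - 1, by omega⟩
  rw [h1]
  conv_lhs => rw [hg]
  rw [show pinListAux θ (g+1) (g+1) = if (g+1) = 0 then [] else
      pinStep θ (g+1) :: pinListAux θ g ((g+1) - pinStep θ (g+1)) from rfl]
  rw [if_neg (by omega)]
  rw [← hg]
  have := hpos M hM
  rw [pinListAux_fuel θ hpos (M - pinStep θ M) g (M - pinStep θ M) (by omega) (by omega)]
  rfl

lemma mono_of_step (k : ℕ) (f : ℕ → ℤ) (h : ∀ n, n < k → f n < f (n+1)) :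
    ∀ m n, m < n → n ≤ k → f m < f n := by
  intro m n hmn hnk
  induction n with
  | zero => omega
  | succ n ih =>
    rcases Nat.lt_or_ge m n with h' | h'
    · exact lt_trans (ih h' (by omega)) (h n (by omega))
    · have hmn' : m = n := by omega
      subst hmn'
      exact h m (by omega)

lemma find_seg (b : ℤ) : ∀ (k : ℕ) (g : ℕ → ℤ), 0 < k → g 0 ≤ b → b ≤ g k →
    ∃ j, j < k ∧ g j ≤ b ∧ b ≤ g (j+1) := by
  intro k
  induction k with
  | zero => intro g h; omega
  | succ k ih =>
    intro g hk h0 hk1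
    by_cases hb : b ≤ g k
    · rcases Nat.eq_zero_or_pos k with h | h
      · subst h
        exact ⟨0, by omega, h0, hk1⟩
      · obtain ⟨j, hj, h1, h2⟩ := ih g h h0 hb
        exact ⟨j, by omega, h1, h2⟩
    · exact ⟨k, by omega, by omega, hk1⟩


set_option maxHeartbeats 2000000 in
theorem pin_aux (θ : ℝ) (hθ : Irrational θ) : ∀ M : ℕ, 1 ≤ M →
    ∀ (k : ℕ) (q : Fin (k + 1) → ℤ × ℤ),
    q 0 = (0, 0) →
    q (Fin.last k) = ((M : ℤ), ⌈(M : ℝ) * θ⌉) →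
    (∀ i : Fin k, (q i.castSucc).1 < (q i.succ).1) →
    (∀ i : Fin (k + 1), θ * ((q i).1 : ℝ) ≤ ((q i).2 : ℝ)) →
    (∀ i j : Fin k, i ≤ j →
      ((q i.succ).2 - (q i.castSucc).2) * ((q j.succ).1 - (q j.castSucc).1) ≤
        ((q j.succ).2 - (q j.castSucc).2) * ((q i.succ).1 - (q i.castSucc).1)) →
    (∀ i : Fin k,
      Int.gcd ((q i.succ).1 - (q i.castSucc).1) ((q i.succ).2 - (q i.castSucc).2) = 1) →
    (∀ x y : ℤ, 0 ≤ x → x ≤ (M : ℤ) → θ * (x : ℝ) ≤ (y : ℝ) →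
      ∀ i : Fin k, (q i.castSucc).1 ≤ x → x ≤ (q i.succ).1 →
        ((q i.succ).2 - (q i.castSucc).2) * (x - (q i.castSucc).1) ≤
          (y - (q i.castSucc).2) * ((q i.succ).1 - (q i.castSucc).1)) →
    (↑(pinList θ M) : Multiset ℕ) =
      Multiset.map (fun i : Fin k => ((q i.succ).1 - (q i.castSucc).1).toNat)
        Finset.univ.val := by
  intro M
  induction M using Nat.strong_induction_on with
  | _ M ih =>
  intro hM k q h0 hlast hmono habove hconvex hprim hlowest
  obtain ⟨⟨ha1, haM⟩, hstrict, _hmaxP⟩ := pinStep_spec θ M hM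
  have hminsl := pinStep_min θ M hM
  set a := pinStep θ M with hadef
  -- k ≥ 1
  have hk : 0 < k := by
    rcases Nat.eq_zero_or_pos k with h | h
    · exfalso
      have he : q (Fin.last k) = q 0 := by congr 1; subst h; rfl
      rw [h0, hlast] at he
      have h1 : (M : ℤ) = 0 := congrArg Prod.fst he
      omega
    · exact h
  -- coordinates as functions on ℕ
  set xc : ℕ → ℤ := fun n => if h : n ≤ k then (q ⟨n, by omega⟩).1 else 0 with hxdef
  set yc : ℕ → ℤ := fun n => if h : n ≤ k then (q ⟨n, by omega⟩).2 else 0 with hydef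
  have hqmk : ∀ i : Fin (k + 1), q i = (xc i.1, yc i.1) := by
    intro i
    have hx : xc i.1 = (q ⟨i.1, by omega⟩).1 := by simp [hxdef, Nat.lt_succ_iff.1 i.2]
    have hy : yc i.1 = (q ⟨i.1, by omega⟩).2 := by simp [hydef, Nat.lt_succ_iff.1 i.2]
    rw [hx, hy]
  simp only [hqmk, Fin.coe_castSucc, Fin.val_succ, Fin.val_zero, Fin.val_last,
    Prod.mk.injEq] at h0 hlast hmono habove hconvex hprim hlowest ⊢
  obtain ⟨hx0, hy0⟩ := h0
  obtain ⟨hxk, hyk⟩ := hlast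
  -- nat-indexed hypotheses
  have hmono' : ∀ n, n < k → xc n < xc (n+1) := fun n hn => hmono ⟨n, hn⟩
  have hconv' : ∀ m n, m ≤ n → n < k →
      (yc (m+1) - yc m) * (xc (n+1) - xc n) ≤ (yc (n+1) - yc n) * (xc (m+1) - xc m) :=
    fun m n hmn hn => hconvex ⟨m, by omega⟩ ⟨n, hn⟩ hmn
  have habove' : ∀ n, n ≤ k → θ * (xc n : ℝ) ≤ (yc n : ℝ) := fun n hn => habove ⟨n, by omega⟩
  have hprim' : ∀ n, n < k → Int.gcd (xc (n+1) - xc n) (yc (n+1) - yc n) = 1 :=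
    fun n hn => hprim ⟨n, hn⟩
  have hlow' : ∀ (X Y : ℤ), 0 ≤ X → X ≤ (M : ℤ) → θ * (X : ℝ) ≤ (Y : ℝ) →
      ∀ n, n < k → xc n ≤ X → X ≤ xc (n+1) →
      (yc (n+1) - yc n) * (X - xc n) ≤ (Y - yc n) * (xc (n+1) - xc n) :=
    fun X Y h1 h2 h3 n hn h4 h5 => hlowest X Y h1 h2 h3 ⟨n, hn⟩ h4 h5
  clear hmono hconvex hprim hlowest habove hqmk
  -- monotonicity consequences
  have hxmono : ∀ m n, m < n → n ≤ k → xc m < xc n := mono_of_step k xc hmono'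
  have hxmono' : ∀ m n, m ≤ n → n ≤ k → xc m ≤ xc n := by
    intro m n h1 h2
    rcases eq_or_lt_of_le h1 with h | h
    · exact le_of_eq (by rw [h])
    · exact le_of_lt (hxmono m n h h2)
  have hx1pos : 1 ≤ xc 1 := by
    have := hxmono 0 1 (by omega) (by omega); omega
  have hx1M : xc 1 ≤ (M : ℤ) := by
    have := hxmono' 1 k (by omega) (le_refl k); omega
  -- yc 1 = ceil (xc 1 * θ)
  have hceil1 : yc 1 = ⌈(xc 1 : ℝ) * θ⌉ := by
    have hub : yc 1 ≤ ⌈(xc 1 : ℝ) * θ⌉ := by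
      have h := hlow' (xc 1) (⌈(xc 1 : ℝ) * θ⌉) (by omega) hx1M
        (by rw [mul_comm]; exact Int.le_ceil _) 0 (by omega) (by omega) (le_refl _)
      rw [hx0, hy0] at h
      simp only [sub_zero, zero_add] at h
      exact le_of_mul_le_mul_right h (by omega)
    have hlb : ⌈(xc 1 : ℝ) * θ⌉ ≤ yc 1 := by
      apply Int.ceil_le.2
      have := habove' 1 (by omega)
      linarith
    omega
  -- chain above the first line
  have habL : ∀ n, n ≤ k → yc 1 * xc n ≤ yc n * xc 1 := by
    intro n
    induction n with
    | zero => intro _; rw [hx0, hy0]; simp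
    | succ n ihn =>
      intro hn
      have h1 := ihn (by omega)
      have h2 := hconv' 0 n (by omega) (by omega)
      rw [hx0, hy0] at h2
      simp only [sub_zero, zero_add] at h2
      nlinarith [h1, h2]
  -- slope minimality of xc 1 along the path
  have hslmin : ∀ b : ℤ, 1 ≤ b → b ≤ (M : ℤ) → yc 1 * b ≤ ⌈(b : ℝ) * θ⌉ * xc 1 := by
    intro b hb1 hbM
    obtain ⟨n, hn, hbl, hbr⟩ := find_seg b k xc (by omega) (by omega) (by omega)
    have hlow := hlow' b (⌈(b : ℝ) * θ⌉) (by omega) hbM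
      (by rw [mul_comm]; exact Int.le_ceil _) n hn hbl hbr
    have hc := hconv' 0 n (by omega) hn
    rw [hx0, hy0] at hc
    simp only [sub_zero, zero_add] at hc
    have hL := habL n (by omega)
    have hΔ : 0 < xc (n+1) - xc n := by have := hmono' n hn; omega
    have hx1p : (0:ℤ) < xc 1 := by omega
    have big : (yc 1 * b) * (xc (n+1) - xc n) ≤ (⌈(b : ℝ) * θ⌉ * xc 1) * (xc (n+1) - xc n) := by
      nlinarith [mul_le_mul_of_nonneg_right hlow (le_of_lt hx1p),
        mul_le_mul_of_nonneg_right hc (by omega : (0:ℤ) ≤ b - xc n),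
        mul_le_mul_of_nonneg_right hL (le_of_lt hΔ)]
    exact le_of_mul_le_mul_right big hΔ
  -- identify xc 1 with a
  set n1 := (xc 1).toNat with hn1def
  have hxn1 : (n1 : ℤ) = xc 1 := Int.toNat_of_nonneg (by omega)
  have hn11 : 1 ≤ n1 := by omega
  have hn1M : n1 ≤ M := by omega
  have hcastn1 : ((n1 : ℕ) : ℝ) = ((xc 1 : ℤ) : ℝ) := by exact_mod_cast congrArg Int.cast hxn1
  have hsl_n1 : ∀ b : ℕ, 1 ≤ b → b ≤ M → sl θ n1 ≤ sl θ b := by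
    intro b hb1 hbM
    have h := hslmin (b : ℤ) (by exact_mod_cast hb1) (by exact_mod_cast hbM)
    rw [sl, sl, div_le_div_iff₀ (by exact_mod_cast hn11) (by exact_mod_cast hb1)]
    have hbcast : ((b : ℕ) : ℝ) = (((b : ℤ) : ℤ) : ℝ) := by push_cast; ring
    have h' : (⌈((n1:ℕ) : ℝ) * θ⌉) * (b : ℤ) ≤ (⌈((b:ℕ) : ℝ) * θ⌉) * (n1 : ℤ) := by
      rw [hcastn1, show ((b:ℕ):ℝ) = (((b:ℤ)):ℝ) from by push_cast; ring, ← hceil1, hxn1]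
      exact h
    exact_mod_cast h'
  have hn1a : n1 = a := by
    rcases lt_trichotomy n1 a with h | h | h
    · exfalso
      have h1 := hstrict n1 hn11 h
      have h2 := hsl_n1 a ha1 haM
      linarith
    · exact h
    · exfalso
      have h1 := hminsl n1 hn11 hn1M
      have h2 := hsl_n1 a ha1 haM
      have heqsl : sl θ n1 = sl θ a := le_antisymm h2 h1
      have hcross : (⌈((n1:ℕ) : ℝ) * θ⌉) * (a : ℤ) = (⌈((a:ℕ) : ℝ) * θ⌉) * (n1 : ℤ) := by
        rw [sl, sl, div_eq_div_iff (Nat.cast_ne_zero.2 (by omega) : (n1:ℝ) ≠ 0) (Nat.cast_ne_zero.2 (by omega) : (a:ℝ) ≠ 0)] at heqsl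
        exact_mod_cast heqsl
      have hg := hprim' 0 (by omega)
      rw [hx0, hy0] at hg
      simp only [sub_zero, zero_add] at hg
      have hy1 : yc 1 = ⌈((n1:ℕ) : ℝ) * θ⌉ := by rw [hceil1, hcastn1]
      have hdvd : xc 1 ∣ (a : ℤ) * yc 1 := ⟨⌈((a:ℕ) : ℝ) * θ⌉, by
        rw [hy1, ← hxn1]; linarith [hcross]⟩
      have hcop : IsCoprime (xc 1) (yc 1) := Int.isCoprime_iff_gcd_eq_one.2 hg
      have hd2 : xc 1 ∣ (a : ℤ) := hcop.dvd_of_dvd_mul_right hdvd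
      have := Int.le_of_dvd (by exact_mod_cast ha1) hd2
      omega
  have hx1a : xc 1 = (a : ℤ) := by omega
  have hy1a : yc 1 = ⌈((a:ℕ) : ℝ) * θ⌉ := by
    rw [hceil1, hx1a]
    norm_num

  -- case split on whether the first segment exhausts M
  by_cases hMa : M = a
  · -- k = 1
    have hk1 : k = 1 := by
      by_contra h
      have h2 : (a:ℤ) < (M:ℤ) := by
        rw [← hx1a, ← hxk]
        exact hxmono 1 k (by omega) (le_refl k)
      omega
    subst hk1
    rw [pinList_cons θ M hM, ← hadef]
    have hz : M - a = 0 := by omega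
    rw [hz]
    have hnil : pinList θ 0 = [] := rfl
    rw [hnil]
    have huniv : (Finset.univ.val : Multiset (Fin 1)) = {0} := rfl
    rw [huniv, Multiset.map_singleton]
    have : ((0 : Fin 1) : ℕ) = 0 := rfl
    simp only [this, zero_add, hx0, hx1a, sub_zero]
    simp
  · -- recursive case
    have haM' : a < M := by omega
    have hk2 : 2 ≤ k := by
      by_contra h
      have hk1 : k = 1 := by omega
      have hxx : xc 1 = (M:ℤ) := by rw [← hxk, hk1]
      omega
    obtain ⟨k', rfl⟩ : ∃ k', k = k' + 1 := ⟨k - 1, by omega⟩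
    set b := M - a with hbdef
    have hb1 : 1 ≤ b := by omega
    have hceiladd : ∀ c : ℕ, 1 ≤ c → a + c ≤ M →
        ⌈((a + c : ℕ) : ℝ) * θ⌉ = ⌈((a:ℕ):ℝ)*θ⌉ + ⌈((c:ℕ):ℝ)*θ⌉ :=
      fun c h1 h2 => ceil_add_of_min θ hθ M a c ha1 h1 h2 hminsl
    set q' : Fin (k' + 1) → ℤ × ℤ :=
      fun i => (xc (i.1 + 1) - (a:ℤ), yc (i.1 + 1) - ⌈((a:ℕ):ℝ)*θ⌉) with hq'def
    have h0' : q' 0 = (0, 0) := by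
      simp only [hq'def, Fin.val_zero, zero_add, hx1a, hy1a, sub_self]
    have hlast' : q' (Fin.last k') = ((b : ℤ), ⌈(b:ℝ)*θ⌉) := by
      have hcadd := hceiladd b hb1 (by omega)
      have hMab : a + b = M := by omega
      rw [hMab] at hcadd
      simp only [hq'def, Fin.val_last, Prod.mk.injEq]
      constructor
      · rw [hxk]; omega
      · rw [hyk]; omega
    have hmono'' : ∀ i : Fin k', (q' i.castSucc).1 < (q' i.succ).1 := by
      intro i
      simp only [hq'def, Fin.coe_castSucc, Fin.val_succ]
      have := hmono' (i.1 + 1) (by omega)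
      omega
    have habove'' : ∀ i : Fin (k'+1), θ * ((q' i).1 : ℝ) ≤ ((q' i).2 : ℝ) := by
      intro i
      obtain ⟨m, hmlt⟩ := i
      simp only [hq'def]
      rcases Nat.eq_zero_or_pos m with h | h
      · subst h
        simp only [zero_add, hx1a, hy1a, sub_self]
        push_cast
        simp
      · have hxm : xc (m+1) ≤ (M:ℤ) := by
          have := hxmono' (m+1) (k'+1) (by omega) (le_refl _)
          omega
        have hgt : (a:ℤ) < xc (m+1) := by
          rw [← hx1a]
          exact hxmono 1 (m+1) (by omega) (by omega)
        set c := (xc (m+1) - (a:ℤ)).toNat with hcdef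
        have hcZ : (c:ℤ) = xc (m+1) - (a:ℤ) := Int.toNat_of_nonneg (by omega)
        have hc1 : 1 ≤ c := by omega
        have hac : a + c ≤ M := by omega
        have hcadd := hceiladd c hc1 hac
        have hcastac : ((a + c : ℕ):ℝ) = ((xc (m+1) : ℤ):ℝ) := by
          have : ((a + c : ℕ):ℤ) = xc (m+1) := by push_cast; omega
          exact_mod_cast congrArg Int.cast this
        rw [hcastac] at hcadd
        have hql : ⌈((xc (m+1) : ℤ) : ℝ) * θ⌉ ≤ yc (m+1) := by
          apply Int.ceil_le.2
          have := habove' (m+1) (by omega)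
          linarith
        have hcgt := ceil_gt θ hθ (c:ℤ) (by exact_mod_cast (by omega : c ≠ 0))
        have r1 : ((⌈((xc (m+1) : ℤ) : ℝ) * θ⌉ : ℤ):ℝ) ≤ ((yc (m+1) : ℤ):ℝ) := by
          exact_mod_cast hql
        have r2 : ((⌈((xc (m+1) : ℤ) : ℝ) * θ⌉ : ℤ):ℝ) =
            ((⌈((a:ℕ):ℝ)*θ⌉ : ℤ):ℝ) + ((⌈((c:ℕ):ℝ)*θ⌉ : ℤ):ℝ) := by
          exact_mod_cast hcadd
        have r3 : ((c:ℕ):ℝ) = ((xc (m+1) : ℤ):ℝ) - ((a:ℕ):ℝ) := by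
          have := congrArg (Int.cast : ℤ → ℝ) hcZ
          push_cast at this ⊢
          linarith
        have r4 : (((c:ℤ)):ℝ) * θ < ((⌈(((c:ℤ)):ℝ) * θ⌉ : ℤ):ℝ) := hcgt
        have r5 : (((c:ℤ)):ℝ) = ((c:ℕ):ℝ) := by push_cast; ring
        rw [r5] at r4
        push_cast
        push_cast at r1 r2 r3 r4
        have r6 : θ * (((xc (m+1) : ℤ):ℝ) - ((a:ℕ):ℝ)) = ((c:ℕ):ℝ) * θ := by
          rw [r3]; ring
        linarith [r1, r2, r4, r6]
    have hconv'' : ∀ i j : Fin k', i ≤ j →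
        ((q' i.succ).2 - (q' i.castSucc).2) * ((q' j.succ).1 - (q' j.castSucc).1) ≤
          ((q' j.succ).2 - (q' j.castSucc).2) * ((q' i.succ).1 - (q' i.castSucc).1) := by
      intro i j hij
      simp only [hq'def, Fin.coe_castSucc, Fin.val_succ]
      have := hconv' (i.1+1) (j.1+1) (by exact Nat.add_le_add_right hij 1) (by omega)
      nlinarith [this]
    have hprim'' : ∀ i : Fin k',
        Int.gcd ((q' i.succ).1 - (q' i.castSucc).1) ((q' i.succ).2 - (q' i.castSucc).2) = 1 := by
      intro i
      simp only [hq'def, Fin.coe_castSucc, Fin.val_succ]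
      have h1 : xc (i.1+1+1) - (a:ℤ) - (xc (i.1+1) - (a:ℤ)) = xc (i.1+1+1) - xc (i.1+1) := by
        ring
      have h2 : yc (i.1+1+1) - ⌈((a:ℕ):ℝ)*θ⌉ - (yc (i.1+1) - ⌈((a:ℕ):ℝ)*θ⌉) =
          yc (i.1+1+1) - yc (i.1+1) := by ring
      rw [h1, h2]
      exact hprim' (i.1+1) (by omega)
    have hlow'' : ∀ X Y : ℤ, 0 ≤ X → X ≤ ((b:ℕ) : ℤ) → θ*(X:ℝ) ≤ (Y:ℝ) →
        ∀ i : Fin k', (q' i.castSucc).1 ≤ X → X ≤ (q' i.succ).1 →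
        ((q' i.succ).2 - (q' i.castSucc).2) * (X - (q' i.castSucc).1) ≤
          (Y - (q' i.castSucc).2) * ((q' i.succ).1 - (q' i.castSucc).1) := by
      intro X Y h1 h2 h3 i h4 h5
      simp only [hq'def, Fin.coe_castSucc, Fin.val_succ] at h4 h5 ⊢
      have hYa : θ * (((X + (a:ℤ)) : ℤ):ℝ) ≤ (((Y + ⌈((a:ℕ):ℝ)*θ⌉) : ℤ):ℝ) := by
        have hla := Int.le_ceil (((a:ℕ):ℝ)*θ)
        push_cast
        nlinarith [h3, hla]
      have hres := hlow' (X + (a:ℤ)) (Y + ⌈((a:ℕ):ℝ)*θ⌉) (by omega) (by omega) hYa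
        (i.1+1) (by omega) (by omega) (by omega)
      nlinarith [hres]
    have IH := ih b (by omega) hb1 k' q' h0' hlast' hmono'' habove'' hconv'' hprim'' hlow''
    rw [pinList_cons θ M hM, ← hadef, show M - a = b from rfl]
    rw [show ((↑(a :: pinList θ b) : Multiset ℕ)) = a ::ₘ (↑(pinList θ b) : Multiset ℕ) from rfl]
    rw [IH, Fin.univ_succ]
    simp only [Finset.cons_val, Multiset.map_cons, Finset.map_val, Multiset.map_map]
    congr 1
    · show a = (xc ((0 : Fin (k'+1+1)).1 + 1) - xc ((0 : Fin (k'+1+1)).1)).toNat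
      simp only [Fin.val_zero, zero_add, hx0, hx1a, sub_zero]
      simp
    · apply Multiset.map_congr rfl
      intro j _
      simp only [hq'def, Function.comp_apply, Function.Embedding.coeFn_mk,
        Fin.val_succ, Fin.coe_castSucc]
      congr 1
      ring


/-- the entries of the incoming partition `P^in_θ(M)` are exactly the
horizontal displacements of the successive segments between lattice points of the lowest
convex polygonal path from `(0,0)` to `(M,⌈Mθ⌉)` staying above the line `y = θx` with
corners at lattice points.  The path is described by its successive lattice points
`q 0, …, q k`; consecutive lattice points means each displacement vector is primitive. -/
theorem pin_eq_path_displacements (θ : ℝ) (hθ : Irrational θ) (M : ℕ) (hM : 1 ≤ M)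
    (k : ℕ) (q : Fin (k + 1) → ℤ × ℤ)
    (h0 : q 0 = (0, 0))
    (hlast : q (Fin.last k) = ((M : ℤ), ⌈(M : ℝ) * θ⌉))
    (hmono : ∀ i : Fin k, (q i.castSucc).1 < (q i.succ).1)
    (habove : ∀ i : Fin (k + 1), θ * ((q i).1 : ℝ) ≤ ((q i).2 : ℝ))
    (hconvex : ∀ i j : Fin k, i ≤ j →
      ((q i.succ).2 - (q i.castSucc).2) * ((q j.succ).1 - (q j.castSucc).1) ≤
        ((q j.succ).2 - (q j.castSucc).2) * ((q i.succ).1 - (q i.castSucc).1))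
    (hprim : ∀ i : Fin k,
      Int.gcd ((q i.succ).1 - (q i.castSucc).1) ((q i.succ).2 - (q i.castSucc).2) = 1)
    (hlowest : ∀ x y : ℤ, 0 ≤ x → x ≤ (M : ℤ) → θ * (x : ℝ) ≤ (y : ℝ) →
      ∀ i : Fin k, (q i.castSucc).1 ≤ x → x ≤ (q i.succ).1 →
        ((q i.succ).2 - (q i.castSucc).2) * (x - (q i.castSucc).1) ≤
          (y - (q i.castSucc).2) * ((q i.succ).1 - (q i.castSucc).1)) :
    (↑(pinList θ M) : Multiset ℕ) =
      Multiset.map (fun i : Fin k => ((q i.succ).1 - (q i.castSucc).1).toNat)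
        Finset.univ.val := by
  exact pin_aux θ hθ M hM k q h0 hlast hmono habove hconvex hprim hlowest
end

section
/- Let θ be irrational and suppose positive integers m₁, m₂ satisfy ⌈(m₁+m₂)θ⌉ = ⌈m₁θ⌉ + ⌈m₂θ⌉ − 1. Then it is impossible that m₁ and m₂ both appear in the incoming partition P^in_θ(M) (for any M containing them), since writing P^in_θ(M) = (m₁, m₂, m₃, …, m_k) would force ⌈(m₁+m₂)θ⌉ + ∑_{i=3}^k ⌈mᵢθ⌉ = ⌊Mθ⌋, contradicting that each ⌈mᵢθ⌉ > mᵢθ. Formally: if a₁,…,a_k are positive integers with ∑ᵢ aᵢ = M and ∑ᵢ ⌈aᵢθ⌉ = ⌈Mθ⌉, and k ≥ 2, then for all distinct indices i, j one has ⌈(aᵢ+aⱼ)θ⌉ = ⌈aᵢθ⌉ + ⌈aⱼθ⌉. -/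
open Finset

lemma split_sum_pair {k : ℕ} {M : Type*} [AddCommMonoid M] (i j : Fin k) (hij : i ≠ j)
    (f : Fin k → M) :
    ∑ l, f l = f i + f j + ∑ l ∈ (univ.erase i).erase j, f l := by
  have hj : j ∈ univ.erase i := by simp [hij.symm]
  rw [add_assoc, Finset.add_sum_erase _ f hj, Finset.add_sum_erase _ f (mem_univ i)]

/-- if positive integers `a₁,…,a_k` (k ≥ 2) sum to `M` with
`∑ᵢ ⌈aᵢθ⌉ = ⌈Mθ⌉`, then the ceiling is additive on every pair. -/
theorem ceil_pairwise_additive (θ : ℝ) (hθ : Irrational θ) (k M : ℕ) (hk : 2 ≤ k)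
    (a : Fin k → ℕ) (ha : ∀ i, 0 < a i) (hsum : ∑ i, a i = M)
    (hceil : ∑ i, ⌈(a i : ℝ) * θ⌉ = ⌈(M : ℝ) * θ⌉) :
    ∀ i j : Fin k, i ≠ j →
      ⌈((a i + a j : ℕ) : ℝ) * θ⌉ = ⌈(a i : ℝ) * θ⌉ + ⌈(a j : ℝ) * θ⌉ := by
  intro i j hij
  set s := (univ.erase i).erase j with hs
  -- upper bound by subadditivity
  have hle : ⌈((a i + a j : ℕ) : ℝ) * θ⌉ ≤ ⌈(a i : ℝ) * θ⌉ + ⌈(a j : ℝ) * θ⌉ := by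
    have : ((a i + a j : ℕ) : ℝ) * θ = (a i : ℝ) * θ + (a j : ℝ) * θ := by
      push_cast; ring
    rw [this]
    exact Int.ceil_add_le _ _
  -- split the hypotheses
  have hC : ⌈(a i : ℝ) * θ⌉ + ⌈(a j : ℝ) * θ⌉ + ∑ l ∈ s, ⌈(a l : ℝ) * θ⌉ = ⌈(M : ℝ) * θ⌉ := by
    exact (split_sum_pair i j hij _).symm.trans hceil
  have hR : (M : ℝ) * θ = ((a i + a j : ℕ) : ℝ) * θ + ∑ l ∈ s, (a l : ℝ) * θ := by
    have hsplit := split_sum_pair i j hij (fun l => (a l : ℝ) * θ)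
    have : (M : ℝ) * θ = ∑ l, (a l : ℝ) * θ := by
      rw [← hsum]; push_cast; rw [Finset.sum_mul]
    rw [this, hsplit]; push_cast; ring
  -- lower bound
  have hge : ⌈(M : ℝ) * θ⌉ ≤ ⌈((a i + a j : ℕ) : ℝ) * θ⌉ + ∑ l ∈ s, ⌈(a l : ℝ) * θ⌉ := by
    rw [Int.ceil_le, hR, Int.cast_add, Int.cast_sum]
    gcongr
    · exact Int.le_ceil _
    · exact Int.le_ceil _
  omega
end

section
/- Let θ be irrational and let a ∈ S_θ, i.e. a is a positive integer with ⌈aθ⌉/a < ⌈a′θ⌉/a′ for all a′ ∈ {1,…,a−1}. Then the line segment from (0,0) to (a,⌈aθ⌉) contains no lattice points in its interior; equivalently gcd(a, ⌈aθ⌉) = 1. -/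
/-- if `a ∈ S_θ`, i.e. `⌈aθ⌉/a < ⌈a'θ⌉/a'` for all positive `a' < a`,
then the vector `(a, ⌈aθ⌉)` is primitive: `gcd(a, ⌈aθ⌉) = 1`. -/
theorem Stheta_primitive (θ : ℝ) (hθ : Irrational θ) (a : ℕ) (ha : 0 < a)
    (hS : ∀ a' : ℕ, 0 < a' → a' < a →
      ((⌈(a : ℝ) * θ⌉ : ℤ) : ℝ) / (a : ℝ) < ((⌈(a' : ℝ) * θ⌉ : ℤ) : ℝ) / (a' : ℝ)) :
    Int.gcd (a : ℤ) ⌈(a : ℝ) * θ⌉ = 1 := by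
  by_contra hne
  set d : ℕ := Int.gcd (a : ℤ) ⌈(a : ℝ) * θ⌉ with hd
  have hd0 : 0 < d := by
    rcases Nat.eq_zero_or_pos d with h | h
    · have := Int.gcd_eq_zero_iff.mp h
      simp at this
      omega
    · exact h
  have hd2 : 2 ≤ d := by omega
  have hda : (d : ℤ) ∣ (a : ℤ) := Int.gcd_dvd_left _ _
  have hdy : (d : ℤ) ∣ ⌈(a : ℝ) * θ⌉ := Int.gcd_dvd_right _ _
  obtain ⟨a', hadef⟩ : d ∣ a := Int.ofNat_dvd.mp hda
  obtain ⟨y', hydef⟩ := hdy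
  have ha'pos : 0 < a' := by
    rcases Nat.eq_zero_or_pos a' with h | h
    · rw [h, Nat.mul_zero] at hadef; omega
    · exact h
  have ha'lt : a' < a := by
    calc a' < 2 * a' := by omega
    _ ≤ d * a' := by exact Nat.mul_le_mul_right a' hd2
    _ = a := hadef.symm
  -- y' ≥ a' θ
  have hdR : (0:ℝ) < (d:ℝ) := by exact_mod_cast hd0
  have haR : (a:ℝ) = (d:ℝ) * (a':ℝ) := by exact_mod_cast hadef
  have hceil : ((⌈(a : ℝ) * θ⌉ : ℤ) : ℝ) = (d:ℝ) * (y':ℝ) := by exact_mod_cast hydef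
  have h1 : (a:ℝ) * θ ≤ (d:ℝ) * (y':ℝ) := hceil ▸ Int.le_ceil _
  have h2 : (a':ℝ) * θ ≤ (y':ℝ) := by
    rw [haR] at h1; nlinarith
  have h3 : (⌈(a' : ℝ) * θ⌉ : ℤ) ≤ y' := Int.ceil_le.mpr h2
  have h3R : ((⌈(a' : ℝ) * θ⌉ : ℤ) : ℝ) ≤ (y':ℝ) := by exact_mod_cast h3
  have ha'R : (0:ℝ) < (a':ℝ) := by exact_mod_cast ha'pos
  have hkey := hS a' ha'pos ha'lt
  have heq : ((⌈(a : ℝ) * θ⌉ : ℤ) : ℝ) / (a : ℝ) = (y':ℝ) / (a':ℝ) := by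
    rw [hceil, haR, mul_div_mul_left _ _ (ne_of_gt hdR)]
  rw [heq] at hkey
  have : ((⌈(a' : ℝ) * θ⌉ : ℤ) : ℝ) / (a':ℝ) ≤ (y':ℝ) / (a':ℝ) := by gcongr
  linarith
end

section
/- Let θ be irrational and M ≥ 1. Write P^in_θ(M) = (a₁,…,a_k) and P^out_θ(M) = (b₁,…,b_l), each with entries in nonincreasing order. Then there is a unique subset I = {i₁ < ⋯ < i_m} ⊆ {1,…,l} such that ∑_{j=1}^{m−1} b_{i_j} < a₁ ≤ ∑_{j=1}^m b_{i_j}, and moreover I = {1,…,m} for some m. -/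
open scoped Classical
open Finset

namespace PinPoutAux

/-- `F θ q = fract (q θ)`. -/
noncomputable def F (θ : ℝ) (q : ℕ) : ℝ := Int.fract ((q : ℝ) * θ)

variable {θ : ℝ}

lemma F_lt_one (θ : ℝ) (q : ℕ) : F θ q < 1 := Int.fract_lt_one _

lemma F_nonneg (θ : ℝ) (q : ℕ) : 0 ≤ F θ q := Int.fract_nonneg _

lemma F_pos (hθ : Irrational θ) {q : ℕ} (hq : 1 ≤ q) : 0 < F θ q := by
  rcases lt_or_eq_of_le (F_nonneg θ q) with h | h
  · exact h
  · exfalso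
    have hirr : Irrational ((q : ℝ) * θ) := hθ.natCast_mul (by omega)
    apply hirr.ne_int ⌊(q : ℝ) * θ⌋
    have h2 := Int.self_sub_fract ((q : ℝ) * θ)
    have h3 : Int.fract ((q : ℝ) * θ) = 0 := h.symm
    rw [h3, sub_zero] at h2
    exact h2

lemma F_ne (hθ : Irrational θ) {q q' : ℕ} (hlt : q < q') : F θ q ≠ F θ q' := by
  intro h
  have hirr : Irrational (((q' - q : ℕ) : ℝ) * θ) := hθ.natCast_mul (by omega)
  apply hirr.ne_int (⌊(q' : ℝ) * θ⌋ - ⌊(q : ℝ) * θ⌋)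
  have hc : ((q' - q : ℕ) : ℝ) = (q' : ℝ) - q := by
    push_cast [Nat.cast_sub hlt.le]; ring
  simp only [F, Int.fract] at h
  rw [hc]
  push_cast
  nlinarith [h]

lemma F_ne' (hθ : Irrational θ) {q q' : ℕ} (hne : q ≠ q') : F θ q ≠ F θ q' := by
  rcases Nat.lt_or_ge q q' with h | h
  · exact F_ne hθ h
  · exact (F_ne hθ (by omega)).symm

lemma ceil_div (hθ : Irrational θ) {q : ℕ} (hq : 1 ≤ q) :
    ((⌈(q : ℝ) * θ⌉ : ℤ) : ℝ) / (q : ℝ) = θ + (1 - F θ q) / q := by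
  have hfr : Int.fract ((q : ℝ) * θ) ≠ 0 := ne_of_gt (F_pos hθ hq)
  have hq0 : (q : ℝ) ≠ 0 := by positivity
  rw [Int.ceil_eq_add_one_sub_fract hfr]
  show ((q : ℝ) * θ + 1 - Int.fract ((q:ℝ)*θ)) / q = θ + (1 - F θ q) / q
  rw [F]
  field_simp
  ring

lemma F_add (hθ : Irrational θ) {x y : ℕ} (hx : 1 ≤ x) (hy : 1 ≤ y) :
    F θ (x + y) = F θ x + F θ y ∨ F θ (x + y) = F θ x + F θ y - 1 := by
  set z : ℤ := ⌊(x : ℝ) * θ⌋ + ⌊(y : ℝ) * θ⌋ - ⌊((x + y : ℕ) : ℝ) * θ⌋ with hzdef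
  have hz : (z : ℝ) = F θ (x + y) - F θ x - F θ y := by
    simp only [F, Int.fract, hzdef]
    push_cast
    ring
  have h1 : (-2 : ℝ) < (z : ℝ) := by
    rw [hz]
    have := F_pos hθ (show 1 ≤ x + y by omega)
    have := F_lt_one θ x
    have := F_lt_one θ y
    linarith
  have h2 : (z : ℝ) < 1 := by
    rw [hz]
    have := F_lt_one θ (x + y)
    have := F_pos hθ hx
    have := F_pos hθ hy
    linarith
  have hz1 : (-2 : ℤ) < z := by exact_mod_cast h1
  have hz2 : z < 1 := by exact_mod_cast h2
  have : z = 0 ∨ z = -1 := by omega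
  rcases this with h | h
  · left
    have : (z : ℝ) = 0 := by exact_mod_cast h
    rw [this] at hz; linarith
  · right
    have : (z : ℝ) = -1 := by exact_mod_cast h
    rw [this] at hz; linarith

lemma pinStep_spec (hθ : Irrational θ) {N : ℕ} (hN : 1 ≤ N) :
    (1 ≤ pinStep θ N ∧ pinStep θ N ≤ N) ∧
      ∀ q, 1 ≤ q → q ≤ N → q ≠ pinStep θ N → F θ q < F θ (pinStep θ N) := by
  obtain ⟨s, hps, hmem_iff⟩ :
      ∃ s : Finset ℕ, pinStep θ N = WithBot.unbotD 0 s.max ∧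
        ∀ x : ℕ, x ∈ s ↔ x ∈ Finset.Icc 1 N ∧ ∀ a' ∈ Finset.Ico 1 x,
          ((⌈(x : ℝ) * θ⌉ : ℤ) : ℝ) / (x : ℝ) < ((⌈(a' : ℝ) * θ⌉ : ℤ) : ℝ) / (a' : ℝ) :=
    ⟨_, rfl, fun x => by
      rw [Finset.filter_congr_decidable]
      exact Finset.mem_filter⟩
  have h1mem : (1 : ℕ) ∈ s := by
    rw [hmem_iff, Finset.mem_Icc]
    refine ⟨⟨le_refl 1, hN⟩, ?_⟩
    intro a' ha'
    rw [Finset.mem_Ico] at ha'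
    omega
  have hne : s.Nonempty := ⟨1, h1mem⟩
  have hps2 : pinStep θ N = s.max' hne := by
    rw [hps, ← Finset.coe_max' hne, WithBot.unbotD_coe]
  have hamem : s.max' hne ∈ s := Finset.max'_mem s hne
  rw [hmem_iff, Finset.mem_Icc] at hamem
  rw [hps2]
  set a := s.max' hne with hadef
  obtain ⟨⟨ha1, haN⟩, hrec⟩ := hamem
  -- the value at `a` strictly dominates the values at all smaller indices
  have hlow : ∀ q, 1 ≤ q → q < a → F θ q < F θ a := by
    intro q h1 hqa
    by_contra hcon
    have hgt : F θ a < F θ q := lt_of_le_of_ne (not_lt.1 hcon) ((F_ne hθ hqa).symm)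
    set d := a - q with hddef
    have hd1 : 1 ≤ d := by omega
    have hdacast : (d : ℝ) = (a : ℝ) - q := by rw [hddef, Nat.cast_sub hqa.le]
    have hFd : F θ d = F θ a - F θ q + 1 := by
      rw [F, Int.fract_eq_iff]
      refine ⟨by
        have := F_lt_one θ q
        have := F_pos hθ ha1
        linarith, by
        have := F_pos hθ h1
        have := F_lt_one θ a
        linarith, ⟨⌊(a : ℝ) * θ⌋ - ⌊(q : ℝ) * θ⌋ - 1, ?_⟩⟩
      rw [hdacast]
      simp only [F, Int.fract]
      push_cast
      ring
    have h2q := hrec q (by rw [Finset.mem_Ico]; omega)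
    have h2d := hrec d (by rw [Finset.mem_Ico]; omega)
    rw [ceil_div hθ ha1, ceil_div hθ h1] at h2q
    rw [ceil_div hθ ha1, ceil_div hθ hd1] at h2d
    have hq' : (1 - F θ a) / a < (1 - F θ q) / q := by linarith
    have hd' : (1 - F θ a) / a < (1 - F θ d) / d := by linarith
    rw [div_lt_div_iff₀ (by positivity) (by positivity)] at hq'
    rw [div_lt_div_iff₀ (by positivity) (by positivity)] at hd'
    rw [hFd, hdacast] at hd'
    nlinarith [hq', hd']
  -- argmax over [1, N] is a record, hence ≤ a, hence = a
  obtain ⟨b, hbmem, hbmax⟩ := Finset.exists_max_image (Finset.Icc 1 N) (F θ)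
    ⟨1, by rw [Finset.mem_Icc]; omega⟩
  rw [Finset.mem_Icc] at hbmem
  have hbrec : b ∈ s := by
    rw [hmem_iff, Finset.mem_Icc]
    refine ⟨hbmem, ?_⟩
    intro a' ha'
    rw [Finset.mem_Ico] at ha'
    have h1' : 1 ≤ a' := ha'.1
    have hlt : a' < b := ha'.2
    have hb1 : 1 ≤ b := by omega
    have hFlt : F θ a' < F θ b :=
      lt_of_le_of_ne (hbmax a' (by rw [Finset.mem_Icc]; omega)) (F_ne hθ hlt)
    rw [ceil_div hθ hb1, ceil_div hθ h1', add_lt_add_iff_left,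
      div_lt_div_iff₀ (by positivity) (by positivity)]
    have hab : (a' : ℝ) ≤ b := by exact_mod_cast hlt.le
    have ha'0 : (0 : ℝ) < a' := by positivity
    nlinarith [F_pos hθ h1', F_lt_one θ b, hFlt]
  have hba : b ≤ a := Finset.le_max' s b hbrec
  have hbeq : b = a := by
    by_contra hne'
    have hblt : b < a := by omega
    have h6 := hlow b hbmem.1 hblt
    have h7 := hbmax a (by rw [Finset.mem_Icc]; omega)
    linarith
  refine ⟨⟨ha1, haN⟩, ?_⟩
  intro q h1 h2 h3
  have hle : F θ q ≤ F θ b := hbmax q (by rw [Finset.mem_Icc]; omega)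
  rw [hbeq] at hle
  exact lt_of_le_of_ne hle (F_ne' hθ h3)

lemma F_neg (hθ : Irrational θ) {q : ℕ} (hq : 1 ≤ q) : F (-θ) q = 1 - F θ q := by
  rw [F, show (q : ℝ) * (-θ) = -((q : ℝ) * θ) by ring,
    Int.fract_neg (ne_of_gt (F_pos hθ hq))]
  rfl

lemma pinStep_neg_spec (hθ : Irrational θ) {N : ℕ} (hN : 1 ≤ N) :
    (1 ≤ pinStep (-θ) N ∧ pinStep (-θ) N ≤ N) ∧
      ∀ q, 1 ≤ q → q ≤ N → q ≠ pinStep (-θ) N → F θ (pinStep (-θ) N) < F θ q := by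
  obtain ⟨⟨h1, h2⟩, h3⟩ := pinStep_spec hθ.neg hN
  refine ⟨⟨h1, h2⟩, ?_⟩
  intro q hq1 hq2 hq3
  have := h3 q hq1 hq2 hq3
  rw [F_neg hθ hq1, F_neg hθ h1] at this
  linarith

lemma claimA (hθ : Irrational θ) {N : ℕ} (hN : 1 ≤ N) :
    N < pinStep (-θ) N + pinStep θ N := by
  obtain ⟨⟨hb1, hbN⟩, hbmin⟩ := pinStep_neg_spec hθ hN
  obtain ⟨⟨hw1, hwN⟩, hwmax⟩ := pinStep_spec hθ hN
  set b := pinStep (-θ) N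
  set w := pinStep θ N
  by_contra hcon
  push_neg at hcon
  have h1 : F θ b < F θ (b + w) := hbmin (b + w) (by omega) hcon (by omega)
  have h2 : F θ (b + w) < F θ w := hwmax (b + w) (by omega) hcon (by omega)
  rcases F_add hθ hb1 hw1 with h | h
  · have := F_pos hθ hb1; linarith
  · have := F_lt_one θ w; linarith

lemma greedy (hθ : Irrational θ) (M A : ℕ) (hA1 : 1 ≤ A) (hAM : A ≤ M) :
    ∀ fuel N S, N ≤ fuel → N + S = M →
      (S < A → (A - S ≤ N ∧ ∀ q, 1 ≤ q → q ≤ N → q ≠ A - S → F θ q < F θ (A - S))) →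
      (pinListAux (-θ) fuel N).sum = N ∧
      (∀ x ∈ pinListAux (-θ) fuel N, 1 ≤ x) ∧
      (∀ m (hm : m < (pinListAux (-θ) fuel N).length),
        ((pinListAux (-θ) fuel N).take m).sum + S < A →
        M < (pinListAux (-θ) fuel N).get ⟨m, hm⟩ + A) := by
  intro fuel
  induction fuel with
  | zero =>
    intro N S hNf _ _
    interval_cases N
    simp [pinListAux]
  | succ fuel ih =>
    intro N S hNf hNS hH
    by_cases hN0 : N = 0
    · subst hN0; simp [pinListAux]
    have hN : 1 ≤ N := by omega
    obtain ⟨⟨hb1, hbN⟩, hbmin⟩ := pinStep_neg_spec hθ hN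
    set b := pinStep (-θ) N with hbdef
    have hlist : pinListAux (-θ) (fuel + 1) N = b :: pinListAux (-θ) fuel (N - b) := by
      rw [pinListAux, if_neg hN0]
    have hH' : (S + b) < A → (A - (S + b) ≤ N - b ∧
        ∀ q, 1 ≤ q → q ≤ N - b → q ≠ A - (S + b) → F θ q < F θ (A - (S + b))) := by
      intro hSb
      have hS : S < A := by omega
      obtain ⟨hwN, hwmax⟩ := hH hS
      set w := A - S with hwdef
      set w' := A - (S + b) with hw'def
      have hw1 : 1 ≤ w := by omega
      have hw'1 : 1 ≤ w' := by omega
      have hw'w : w' + b = w := by omega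
      refine ⟨by omega, ?_⟩
      have hbw : b ≠ w := by omega
      have hFbw : F θ b < F θ w := hbmin w hw1 (by omega) (Ne.symm hbw)
      have hFw : F θ w = F θ w' + F θ b := by
        rcases F_add hθ hw'1 hb1 with h | h
        · rw [← hw'w]; exact h
        · exfalso
          rw [hw'w] at h
          have := F_lt_one θ w'
          linarith
      intro q h1 hqN' hqw'
      have hc1 : 1 ≤ q + b := by omega
      have hcN : q + b ≤ N := by omega
      have hcb : q + b ≠ b := by omega
      have hcw : q + b ≠ w := by omega
      have hFc : F θ (q + b) = F θ q + F θ b := by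
        rcases F_add hθ h1 hb1 with h | h
        · exact h
        · exfalso
          have h4 := hbmin (q + b) hc1 hcN hcb
          have := F_lt_one θ q
          linarith
      have h5 := hwmax (q + b) hc1 hcN hcw
      rw [hFc, hFw] at h5
      linarith
    have hIH := ih (N - b) (S + b) (by omega) (by omega) hH'
    rw [hlist]
    refine ⟨?_, ?_, ?_⟩
    · rw [List.sum_cons, hIH.1]; omega
    · intro x hx
      rcases List.mem_cons.1 hx with h | h
      · omega
      · exact hIH.2.1 x h
    · intro m hm hsum
      cases m with
      | zero =>
        simp only [List.take_zero, List.sum_nil, Nat.zero_add] at hsum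
        have hS : S < A := hsum
        obtain ⟨hwN, hwmax⟩ := hH hS
        obtain ⟨⟨hv1, hvN⟩, hvmax⟩ := pinStep_spec hθ hN
        have hvw : pinStep θ N = A - S := by
          by_contra hne
          have hAS1 : 1 ≤ A - S := by omega
          have h1 := hvmax (A - S) hAS1 hwN (fun h => hne h.symm)
          have h2 := hwmax (pinStep θ N) hv1 hvN hne
          linarith
        have hca := claimA hθ hN
        rw [hvw] at hca
        show M < b + A
        omega
      | succ m =>
        have hm' : m < (pinListAux (-θ) fuel (N - b)).length := by
          simpa using hm
        have hsum' : ((pinListAux (-θ) fuel (N - b)).take m).sum + (S + b) < A := by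
          rw [List.take_succ_cons, List.sum_cons] at hsum
          omega
        have := hIH.2.2 m hm' hsum'
        simpa using this

lemma headI_pinList (θ : ℝ) {M : ℕ} (hM : 1 ≤ M) :
    (pinList θ M).headI = pinStep θ M := by
  cases M with
  | zero => omega
  | succ k => simp [pinList, pinListAux]

lemma sum_filter_take (L : List ℕ) (m : ℕ) (hm : m ≤ L.length) :
    ∑ j ∈ Finset.univ.filter (fun j : Fin L.length => (j : ℕ) < m), L.get j
      = (L.take m).sum := by
  induction m with
  | zero => simp
  | succ m ihm =>
    have hm' : m ≤ L.length := by omega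
    have hmlt : m < L.length := by omega
    have hset : Finset.univ.filter (fun j : Fin L.length => (j : ℕ) < m + 1)
        = insert (⟨m, hmlt⟩ : Fin L.length)
            (Finset.univ.filter (fun j : Fin L.length => (j : ℕ) < m)) := by
      ext j
      simp only [Finset.mem_filter, Finset.mem_insert, Finset.mem_univ, true_and, Fin.ext_iff]
      omega
    rw [hset, Finset.sum_insert (by simp), ihm hm', List.sum_take_succ L m hmlt]
    exact Nat.add_comm _ _

lemma sum_univ_get (L : List ℕ) : ∑ j : Fin L.length, L.get j = L.sum := by
  have h := sum_filter_take L L.length le_rfl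
  rw [List.take_length] at h
  rw [← h]
  apply Finset.sum_congr _ (fun _ _ => rfl)
  ext j
  simp [j.isLt]

end PinPoutAux

open PinPoutAux in
/-- with `a₁` the first (largest) entry of `P^in_θ(M)` and
`b₁ ≥ ⋯ ≥ b_l` the outgoing partition `P^out_θ(M)`, there is a unique subset
`I = {i₁ < ⋯ < i_m}` of indices with `∑_{j<m} b_{i_j} < a₁ ≤ ∑_{j≤m} b_{i_j}`,
and moreover any such subset is an initial segment `{1,…,m}`. -/
theorem pin_pout_unique_initial_segment (θ : ℝ) (hθ : Irrational θ) (M : ℕ)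
    (hM : 1 ≤ M) :
    (∃! I : Finset (Fin (poutList θ M).length),
        ∃ h : I.Nonempty,
          (∑ j ∈ I.erase (I.max' h), (poutList θ M).get j) < (pinList θ M).headI ∧
          (pinList θ M).headI ≤ ∑ j ∈ I, (poutList θ M).get j) ∧
      ∀ I : Finset (Fin (poutList θ M).length),
        (∃ h : I.Nonempty,
          (∑ j ∈ I.erase (I.max' h), (poutList θ M).get j) < (pinList θ M).headI ∧
          (pinList θ M).headI ≤ ∑ j ∈ I, (poutList θ M).get j) →
        ∃ m : ℕ, I = Finset.univ.filter (fun j : Fin (poutList θ M).length => (j : ℕ) < m) := by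
  classical
  set A := pinStep θ M with hA
  obtain ⟨⟨hA1, hAM⟩, _⟩ := pinStep_spec hθ hM
  have hhead : (pinList θ M).headI = A := headI_pinList θ hM
  -- facts about the outgoing list
  have hgreedy := greedy hθ M A hA1 hAM M M 0 le_rfl (by omega)
    (by
      intro _
      obtain ⟨⟨h1, h2⟩, h3⟩ := pinStep_spec hθ hM
      rw [Nat.sub_zero]
      exact ⟨h2, h3⟩)
  have hpoutdef : poutList θ M = pinListAux (-θ) M M := rfl
  rw [← hpoutdef] at hgreedy
  obtain ⟨hsum, hpos, hkey⟩ := hgreedy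
  set L := poutList θ M with hL
  -- basic facts
  have hl1 : 1 ≤ L.length := by
    by_contra h
    have : L.length = 0 := by omega
    rw [List.length_eq_zero_iff] at this
    rw [this] at hsum
    simp at hsum
    omega
  set l := L.length with hldef
  set T : ℕ → ℕ := fun m => (L.take m).sum with hT
  have hTl : T l = M := by rw [hT]; simp only [hldef, List.take_length]; exact hsum
  have hfind : ∃ m, A ≤ T m := ⟨l, by omega⟩
  set m₀ := Nat.find hfind with hm₀
  have hm₀spec : A ≤ T m₀ := Nat.find_spec hfind
  have hm₀min : ∀ k, k < m₀ → T k < A := by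
    intro k hk
    have := Nat.find_min hfind hk
    omega
  have hm₀le : m₀ ≤ l := Nat.find_le (by omega)
  have hm₀pos : 0 < m₀ := by
    rcases Nat.eq_zero_or_pos m₀ with h | h
    · exfalso
      rw [h] at hm₀spec
      simp [hT] at hm₀spec
      omega
    · exact h
  have hkey' : ∀ i : Fin l, T (i : ℕ) < A → M < L.get i + A := by
    intro i hi
    exact hkey i i.isLt hi
  have hgetle : ∀ i : Fin l, L.get i ≤ M := by
    intro i
    have h1 : L.get i ≤ ∑ j : Fin l, L.get j :=
      Finset.single_le_sum (f := fun j : Fin l => L.get j)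
        (fun _ _ => Nat.zero_le _) (Finset.mem_univ i)
    rw [sum_univ_get] at h1
    omega
  set I₀ := Finset.univ.filter (fun j : Fin l => (j : ℕ) < m₀) with hI₀
  have hI₀sum : ∑ j ∈ I₀, L.get j = T m₀ := sum_filter_take L m₀ hm₀le
  have hI₀ne : I₀.Nonempty := by
    refine ⟨⟨0, by omega⟩, ?_⟩
    rw [hI₀, Finset.mem_filter]
    exact ⟨Finset.mem_univ _, by simpa using hm₀pos⟩
  have hm₀1l : m₀ - 1 < l := by omega
  have hmax' : I₀.max' hI₀ne = ⟨m₀ - 1, hm₀1l⟩ := by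
    apply le_antisymm
    · apply Finset.max'_le
      intro y hy
      rw [hI₀, Finset.mem_filter] at hy
      show (y : ℕ) ≤ m₀ - 1
      omega
    · apply Finset.le_max'
      rw [hI₀, Finset.mem_filter]
      refine ⟨Finset.mem_univ _, ?_⟩
      show m₀ - 1 < m₀
      omega
  have herase : I₀.erase (⟨m₀ - 1, hm₀1l⟩ : Fin l)
      = Finset.univ.filter (fun j : Fin l => (j : ℕ) < m₀ - 1) := by
    ext j
    rw [Finset.mem_erase, hI₀]
    simp only [Finset.mem_filter, Finset.mem_univ, true_and]
    constructor
    · rintro ⟨hne', hlt'⟩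
      have hne'' : (j : ℕ) ≠ m₀ - 1 := fun h => hne' (Fin.ext h)
      omega
    · intro h
      refine ⟨?_, by omega⟩
      intro hcon
      have hval : (j : ℕ) = m₀ - 1 := by rw [hcon]
      omega
  have herasesum : ∑ j ∈ I₀.erase (I₀.max' hI₀ne), L.get j = T (m₀ - 1) := by
    rw [hmax', herase]
    exact sum_filter_take L (m₀ - 1) (by omega)
  have hI₀valid : ∃ h : I₀.Nonempty,
      (∑ j ∈ I₀.erase (I₀.max' h), L.get j) < A ∧ A ≤ ∑ j ∈ I₀, L.get j := by
    refine ⟨hI₀ne, ?_, ?_⟩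
    · rw [herasesum]
      exact hm₀min (m₀ - 1) (by omega)
    · rw [hI₀sum]; exact hm₀spec
  -- uniqueness
  have huniq : ∀ I : Finset (Fin l),
      (∃ h : I.Nonempty,
        (∑ j ∈ I.erase (I.max' h), L.get j) < A ∧ A ≤ ∑ j ∈ I, L.get j) → I = I₀ := by
    intro I hI
    obtain ⟨hne, hlt, hge⟩ := hI
    have hsub : ∀ i : Fin l, (i : ℕ) < m₀ → i ∈ I := by
      intro i hi
      by_contra hnotin
      have h1 : ∑ j ∈ I, L.get j + L.get i ≤ M := by
        have h2 : ∑ j ∈ insert i I, L.get j ≤ ∑ j : Fin l, L.get j :=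
          Finset.sum_le_sum_of_subset (Finset.subset_univ _)
        rw [Finset.sum_insert hnotin, sum_univ_get, hsum] at h2
        omega
      have h2 : M < L.get i + A := hkey' i (hm₀min i hi)
      omega
    have hsup : ∀ j ∈ I, (j : ℕ) < m₀ := by
      intro j hj
      by_contra hge'
      push_neg at hge'
      have hx : j ≤ I.max' hne := Finset.le_max' I j hj
      rw [Fin.le_def] at hx
      have hsubset : I₀ ⊆ I.erase (I.max' hne) := by
        intro i hi
        rw [hI₀, Finset.mem_filter] at hi
        rw [Finset.mem_erase]
        refine ⟨?_, hsub i hi.2⟩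
        intro hcon
        have : (i : ℕ) = ((I.max' hne : Fin l) : ℕ) := by rw [hcon]
        omega
      have h3 : ∑ j ∈ I₀, L.get j ≤ ∑ j ∈ I.erase (I.max' hne), L.get j :=
        Finset.sum_le_sum_of_subset hsubset
      rw [hI₀sum] at h3
      omega
    ext j
    rw [hI₀, Finset.mem_filter]
    constructor
    · intro hj
      exact ⟨Finset.mem_univ _, hsup j hj⟩
    · intro hj
      exact hsub j hj.2
  rw [hhead]
  constructor
  · exact ⟨I₀, hI₀valid, huniq⟩
  · intro I hI
    exact ⟨m₀, huniq I hI⟩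
end

section
/- Let θ be irrational and M ≥ 1. Write P^in_θ(M) = (a₁,…,a_k) and P^out_θ(M) = (b₁,…,b_l) with entries nonincreasing, and let m be minimal with ∑_{j=1}^m bⱼ ≥ a₁. Then for each n with 1 ≤ n ≤ m, one has δ_θ(a₁ − ∑_{j=1}^{n−1} bⱼ, bₙ) = 1, where δ_θ(a,b) := b⌈aθ⌉ − a⌊bθ⌋. -/
open scoped Classical
open Finset

/-! ### Auxiliary definitions and lemmas -/

/-- The finset of "records" used in `pinStep`. -/
noncomputable def recSet (θ : ℝ) (M : ℕ) : Finset ℕ :=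
  (Finset.Icc 1 M).filter (fun a : ℕ => ∀ a' ∈ Finset.Ico 1 a,
      ((⌈(a : ℝ) * θ⌉ : ℤ) : ℝ) / (a : ℝ) < ((⌈(a' : ℝ) * θ⌉ : ℤ) : ℝ) / (a' : ℝ))

lemma pinStep_eq (θ : ℝ) (M : ℕ) : pinStep θ M = WithBot.unbotD 0 ((recSet θ M).max) := rfl

/-- Invariant: `x` is a minimizer of `⌈aθ⌉/a` on `[1,N]` with coprime numerator. -/
def InvU (θ : ℝ) (N x : ℕ) : Prop :=
  1 ≤ x ∧ x ≤ N ∧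
    (∀ a' : ℕ, 1 ≤ a' → a' ≤ N → ⌈(x : ℝ) * θ⌉ * (a' : ℤ) ≤ ⌈(a' : ℝ) * θ⌉ * (x : ℤ)) ∧
    IsCoprime (⌈(x : ℝ) * θ⌉) (x : ℤ)

lemma irr_lt_ceil {θ : ℝ} (hθ : Irrational θ) (a : ℕ) (ha : 1 ≤ a) :
    (a : ℝ) * θ < ⌈(a : ℝ) * θ⌉ := by
  refine lt_of_le_of_ne (Int.le_ceil _) ?_
  have h : Irrational ((a : ℝ) * θ) := hθ.natCast_mul (by omega)
  exact fun h' => (h.ne_int _ h')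

lemma irr_floor_lt {θ : ℝ} (hθ : Irrational θ) (a : ℕ) (ha : 1 ≤ a) :
    (⌊(a : ℝ) * θ⌋ : ℝ) < (a : ℝ) * θ := by
  refine lt_of_le_of_ne (Int.floor_le _) ?_
  have h : Irrational ((a : ℝ) * θ) := hθ.natCast_mul (by omega)
  exact fun h' => (h.ne_int _ h'.symm)

lemma one_mem_recSet (θ : ℝ) (M : ℕ) (hM : 1 ≤ M) : (1 : ℕ) ∈ recSet θ M := by
  simp only [recSet, Finset.mem_filter, Finset.mem_Icc]
  refine ⟨⟨le_refl 1, hM⟩, ?_⟩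
  intro a' ha'
  simp at ha'

lemma pinStep_spec_s10 (θ : ℝ) (M : ℕ) (hM : 1 ≤ M) :
    pinStep θ M ∈ recSet θ M ∧ ∀ a ∈ recSet θ M, a ≤ pinStep θ M := by
  have hne : (recSet θ M).Nonempty := ⟨1, one_mem_recSet θ M hM⟩
  have he : pinStep θ M = (recSet θ M).max' hne := by
    rw [pinStep_eq, ← Finset.coe_max' hne, WithBot.unbotD_coe]
  rw [he]
  exact ⟨Finset.max'_mem _ hne, fun a ha => Finset.le_max' _ a ha⟩

lemma pinStep_pos_le (θ : ℝ) (M : ℕ) (hM : 1 ≤ M) :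
    1 ≤ pinStep θ M ∧ pinStep θ M ≤ M := by
  have h := (pinStep_spec_s10 θ M hM).1
  simp only [recSet, Finset.mem_filter, Finset.mem_Icc] at h
  exact h.1

lemma pinStep_invU (θ : ℝ) (hθ : Irrational θ) (M : ℕ) (hM : 1 ≤ M) :
    InvU θ M (pinStep θ M) := by
  classical
  obtain ⟨hmem, hmax⟩ := pinStep_spec_s10 θ M hM
  set a := pinStep θ M with hadef
  simp only [recSet, Finset.mem_filter, Finset.mem_Icc] at hmem
  obtain ⟨⟨ha1, haM⟩, hrec⟩ := hmem
  -- the smallest minimizer s0 of f on [1, M]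
  have hIcc1 : (1 : ℕ) ∈ Finset.Icc 1 M := by rw [Finset.mem_Icc]; omega
  obtain ⟨s, hs, hsmin⟩ := Finset.exists_min_image (Finset.Icc 1 M)
    (fun b : ℕ => ((⌈(b : ℝ) * θ⌉ : ℤ) : ℝ) / (b : ℝ)) ⟨1, hIcc1⟩
  set T := (Finset.Icc 1 M).filter (fun t : ℕ => ∀ a' ∈ Finset.Icc 1 M,
      ((⌈(t : ℝ) * θ⌉ : ℤ) : ℝ) / (t : ℝ) ≤ ((⌈(a' : ℝ) * θ⌉ : ℤ) : ℝ) / (a' : ℝ)) with hT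
  have hTne : T.Nonempty := ⟨s, by simp only [hT, Finset.mem_filter]; exact ⟨hs, fun b hb => hsmin b hb⟩⟩
  set s0 := T.min' hTne with hs0def
  have hs0T : s0 ∈ T := T.min'_mem hTne
  simp only [hT, Finset.mem_filter, Finset.mem_Icc] at hs0T
  obtain ⟨⟨hs01, hs0M⟩, hs0min⟩ := hs0T
  have hs0rec : s0 ∈ recSet θ M := by
    simp only [recSet, Finset.mem_filter, Finset.mem_Icc]
    refine ⟨⟨hs01, hs0M⟩, ?_⟩
    intro a' ha'
    rw [Finset.mem_Ico] at ha'
    have ha'Icc : a' ∈ Finset.Icc 1 M := by rw [Finset.mem_Icc]; omega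
    have h1 := hs0min a' (by omega)
    rcases lt_or_eq_of_le h1 with h | h
    · exact h
    · exfalso
      have ha'T : a' ∈ T := by
        simp only [hT, Finset.mem_filter]
        refine ⟨ha'Icc, ?_⟩
        intro b hb
        rw [← h]
        exact hs0min b (Finset.mem_Icc.mp hb)
      have := T.min'_le a' ha'T
      omega
  have hs0a : s0 ≤ a := hmax s0 hs0rec
  have has0 : a = s0 := by
    rcases eq_or_lt_of_le hs0a with h | h
    · exact h.symm
    · exfalso
      have h1 := hrec s0 (by rw [Finset.mem_Ico]; omega)
      have h2 := hs0min a (by omega)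
      linarith
  -- cross-multiplied minimality
  have hmin : ∀ a' : ℕ, 1 ≤ a' → a' ≤ M →
      ⌈(a : ℝ) * θ⌉ * (a' : ℤ) ≤ ⌈(a' : ℝ) * θ⌉ * (a : ℤ) := by
    intro a' h1 h2
    have hd := hs0min a' (by omega)
    rw [← has0] at hd
    have hapos : (0 : ℝ) < (a : ℝ) := by exact_mod_cast Nat.lt_of_lt_of_le Nat.zero_lt_one ha1
    have ha'pos : (0 : ℝ) < (a' : ℝ) := by exact_mod_cast Nat.lt_of_lt_of_le Nat.zero_lt_one h1
    rw [div_le_div_iff₀ hapos ha'pos] at hd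
    exact_mod_cast hd
  refine ⟨ha1, haM, hmin, ?_⟩
  -- coprimality
  rw [Int.isCoprime_iff_gcd_eq_one]
  by_contra hg
  set p := ⌈(a : ℝ) * θ⌉ with hp
  set g := Int.gcd p (a : ℤ) with hgdef
  have hgp : (g : ℤ) ∣ p := Int.gcd_dvd_left _ _
  have hgaz : (g : ℤ) ∣ (a : ℤ) := Int.gcd_dvd_right _ _
  have hga : g ∣ a := by exact_mod_cast hgaz
  have hg0 : g ≠ 0 := by
    intro h0
    rw [h0] at hga
    omega
  have hg2 : 2 ≤ g := by omega
  obtain ⟨a₀, ha₀⟩ := hga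
  obtain ⟨p₀, hp₀⟩ := hgp
  have ha₀1 : 1 ≤ a₀ := by
    rcases Nat.eq_zero_or_pos a₀ with h | h
    · rw [h, Nat.mul_zero] at ha₀; omega
    · omega
  have ha₀a : a₀ < a := by
    calc a₀ < 2 * a₀ := by omega
    _ ≤ g * a₀ := by exact Nat.mul_le_mul_right a₀ hg2
    _ = a := ha₀.symm
  have hlt : (a : ℝ) * θ < p := irr_lt_ceil hθ a ha1
  have hgpos : (0 : ℝ) < (g : ℝ) := by exact_mod_cast Nat.lt_of_lt_of_le Nat.zero_lt_one (by omega)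
  have hlt0 : (a₀ : ℝ) * θ < (p₀ : ℝ) := by
    have h1 : ((g : ℝ) * a₀) * θ < (g : ℝ) * p₀ := by
      have e1 : ((g : ℝ) * a₀) = (a : ℝ) := by exact_mod_cast congrArg (Nat.cast : ℕ → ℝ) ha₀.symm
      have e2 : ((g : ℝ) * p₀) = (p : ℝ) := by exact_mod_cast congrArg (Int.cast : ℤ → ℝ) hp₀.symm
      rw [e1, e2]; exact hlt
    nlinarith
  have hceil0 : ⌈(a₀ : ℝ) * θ⌉ ≤ p₀ := Int.ceil_le.mpr hlt0.le
  have hfr := hrec a₀ (by rw [Finset.mem_Ico]; omega)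
  -- hfr : p/a < ⌈a₀θ⌉/a₀ ≤ p₀/a₀ = p/a
  have ha₀pos : (0 : ℝ) < (a₀ : ℝ) := by exact_mod_cast ha₀1
  have hapos : (0 : ℝ) < (a : ℝ) := by exact_mod_cast ha1
  have hchain : ((⌈(a₀ : ℝ) * θ⌉ : ℤ) : ℝ) / (a₀ : ℝ) ≤ (p₀ : ℝ) / a₀ := by
    have h' : ((⌈(a₀ : ℝ) * θ⌉ : ℤ) : ℝ) ≤ (p₀ : ℝ) := by exact_mod_cast hceil0
    exact div_le_div_of_nonneg_right h' ha₀pos.le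
  have heqfr : (p₀ : ℝ) / a₀ = (p : ℝ) / a := by
    have e1 : (a : ℝ) = (g : ℝ) * a₀ := by exact_mod_cast congrArg (Nat.cast : ℕ → ℝ) ha₀
    have e2 : (p : ℝ) = (g : ℝ) * p₀ := by exact_mod_cast congrArg (Int.cast : ℤ → ℝ) hp₀
    rw [e1, e2, mul_div_mul_left _ _ (ne_of_gt hgpos)]
  rw [heqfr] at hchain
  linarith

lemma ceil_neg_eq (θ : ℝ) (y : ℕ) : ⌈(y : ℝ) * (-θ)⌉ = -⌊(y : ℝ) * θ⌋ := by
  rw [mul_neg, Int.ceil_neg]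

/-- The Farey-neighbour lemma: best upper and best lower approximations with
denominators at most `N` have determinant one, and their denominators sum to more
than `N`. -/
lemma farey (θ : ℝ) (hθ : Irrational θ) (N x y : ℕ)
    (hx : InvU θ N x) (hy : InvU (-θ) N y) :
    ⌈(x : ℝ) * θ⌉ * (y : ℤ) - ⌊(y : ℝ) * θ⌋ * (x : ℤ) = 1 ∧ (N : ℤ) < (x : ℤ) + y := by
  obtain ⟨hx1, hxN, hxmin, hxcop⟩ := hx
  obtain ⟨hy1, hyN, hymin', hycop'⟩ := hy
  set p := ⌈(x : ℝ) * θ⌉ with hp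
  set q := ⌊(y : ℝ) * θ⌋ with hq
  have hymin : ∀ b' : ℕ, 1 ≤ b' → b' ≤ N → ⌊(b' : ℝ) * θ⌋ * (y : ℤ) ≤ q * (b' : ℤ) := by
    intro b' h1 h2
    have h := hymin' b' h1 h2
    rw [ceil_neg_eq, ceil_neg_eq] at h
    rw [hq]; linarith
  have hycop : IsCoprime q (y : ℤ) := by
    have h := hycop'
    rw [ceil_neg_eq] at h
    rw [hq]
    exact (IsCoprime.neg_left_iff _ _).mp h
  obtain ⟨u, v, huv⟩ := hycop
  have hy0 : (0 : ℤ) < (y : ℤ) := by exact_mod_cast hy1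
  have hyNz : (y : ℤ) ≤ (N : ℤ) := by exact_mod_cast hyN
  have hxNz : (x : ℤ) ≤ (N : ℤ) := by exact_mod_cast hxN
  have hx0 : (0 : ℤ) < (x : ℤ) := by exact_mod_cast hx1
  set x' : ℤ := (N : ℤ) - (((N : ℤ) + u) % y) with hx'def
  have hmod1 : 0 ≤ ((N : ℤ) + u) % y := Int.emod_nonneg _ (by omega)
  have hmod2 : ((N : ℤ) + u) % y < y := Int.emod_lt_of_pos _ hy0
  have hx'1 : (N : ℤ) - y < x' := by omega
  have hx'2 : x' ≤ N := by omega
  have hx'pos : 1 ≤ x' := by omega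
  have hxeq : x' = -u + (y : ℤ) * (((N : ℤ) + u) / y) := by
    have h := Int.emod_add_mul_ediv ((N : ℤ) + u) (y : ℤ)
    omega
  set p' : ℤ := v + q * (((N : ℤ) + u) / y) with hp'def
  have hp'y : p' * y = q * x' + 1 := by
    rw [hxeq, hp'def]
    linear_combination huv
  set a' : ℕ := x'.toNat with ha'def
  have ha'z : (a' : ℤ) = x' := Int.toNat_of_nonneg (by omega)
  have ha'1 : 1 ≤ a' := by omega
  have ha'N : a' ≤ N := by
    have : (a' : ℤ) ≤ N := by omega
    exact_mod_cast this
  -- (i) a'·θ < p'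
  have hstep1 : (a' : ℝ) * θ < p' := by
    by_contra hcon
    push_neg at hcon
    have hirr : ((p' : ℝ)) < (a' : ℝ) * θ := by
      refine lt_of_le_of_ne hcon ?_
      have h : Irrational ((a' : ℝ) * θ) := hθ.natCast_mul (by omega)
      exact fun h' => (h.ne_int _ h'.symm)
    have hfl : p' ≤ ⌊(a' : ℝ) * θ⌋ := Int.le_floor.mpr hirr.le
    have h1 := hymin a' ha'1 ha'N
    have h2 : p' * y ≤ ⌊(a' : ℝ) * θ⌋ * y := by
      apply mul_le_mul_of_nonneg_right hfl (by omega)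
    rw [hp'y] at h2
    rw [ha'z] at h1
    omega
  -- (iii) p * x' ≤ p' * x
  have hceil' : ⌈(a' : ℝ) * θ⌉ ≤ p' := Int.ceil_le.mpr hstep1.le
  have h3 : p * x' ≤ p' * x := by
    have h1 := hxmin a' ha'1 ha'N
    have h2 : ⌈(a' : ℝ) * θ⌉ * (x : ℤ) ≤ p' * x := by
      apply mul_le_mul_of_nonneg_right hceil' (by omega)
    rw [ha'z] at h1
    omega
  -- positivity of determinant
  have hD1 : 1 ≤ p * y - q * x := by
    have hu1 : (x : ℝ) * θ < p := irr_lt_ceil hθ x hx1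
    have hl1 : (q : ℝ) < (y : ℝ) * θ := irr_floor_lt hθ y hy1
    have hyR : (0 : ℝ) < (y : ℝ) := by exact_mod_cast hy1
    have hxR : (0 : ℝ) < (x : ℝ) := by exact_mod_cast hx1
    have : (0 : ℝ) < (p : ℝ) * y - q * x := by nlinarith
    have h' : (0 : ℤ) < p * y - q * x := by exact_mod_cast this
    omega
  -- (iv) p' * x ≤ p * x'
  have h4 : p' * x ≤ p * x' := by
    by_contra hcon
    push_neg at hcon
    have hge : 1 ≤ p' * x - p * x' := by omega
    have hxid : (x : ℤ) = (y : ℤ) * (p' * x - p * x') + x' * (p * y - q * x) := by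
      linear_combination (-(x : ℤ)) * hp'y
    have : (x : ℤ) ≥ (y : ℤ) + x' := by nlinarith
    omega
  have heq : p * x' = p' * x := le_antisymm h3 h4
  -- (v) determinant is 1
  set D := p * y - q * x with hD
  have hDx : D * x' = x := by
    rw [hD]
    linear_combination (y : ℤ) * heq + (x : ℤ) * hp'y
  have hpD : p = p' * D := by
    have h2 : x' ≠ 0 := by omega
    refine mul_right_cancel₀ h2 ?_
    rw [mul_assoc, hDx]
    exact heq
  have hunit : IsUnit D := hxcop.isUnit_of_dvd' ⟨p', by rw [hpD, mul_comm]⟩ ⟨x', hDx.symm⟩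
  have hD1' : D = 1 := by
    rcases Int.isUnit_iff.mp hunit with h | h
    · exact h
    · omega
  constructor
  · exact hD1'
  · have : (x : ℤ) = x' := by rw [← hDx, hD1', one_mul]
    omega

/-- The inductive step: subtracting the best lower denominator preserves the
upper invariant. -/
lemma stepInvU (θ : ℝ) (hθ : Irrational θ) (N x y : ℕ)
    (hx : InvU θ N x) (hy : InvU (-θ) N y) (hyx : y < x) :
    InvU θ (N - y) (x - y) := by
  obtain ⟨hdet, hNxy⟩ := farey θ hθ N x y hx hy
  obtain ⟨hx1, hxN, hxmin, hxcop⟩ := hx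
  obtain ⟨hy1, hyN, hymin', hycop'⟩ := hy
  set p := ⌈(x : ℝ) * θ⌉ with hp
  set q := ⌊(y : ℝ) * θ⌋ with hq
  have hcast : ((x - y : ℕ) : ℤ) = (x : ℤ) - (y : ℤ) := by
    have : y ≤ x := hyx.le
    omega
  have hcastR : ((x - y : ℕ) : ℝ) = (x : ℝ) - (y : ℝ) := by
    have h := hcast
    push_cast at h ⊢
    exact_mod_cast h
  have hu1 : (x : ℝ) * θ < p := irr_lt_ceil hθ x hx1
  have hl1 : (q : ℝ) < (y : ℝ) * θ := irr_floor_lt hθ y hy1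
  have hyR : (0 : ℝ) < (y : ℝ) := by exact_mod_cast hy1
  have hxR : (0 : ℝ) < (x : ℝ) := by exact_mod_cast hx1
  have hyxR : (y : ℝ) < (x : ℝ) := by exact_mod_cast hyx
  have hdetR : (p : ℝ) * y - q * x = 1 := by exact_mod_cast hdet
  -- ceiling of (x-y)θ is p - q
  have hkey : ((p : ℝ) - (x : ℝ) * θ) + ((y : ℝ) * θ - q) < 1 := by
    have hA : (0:ℝ) < (p:ℝ) - (x:ℝ)*θ := by linarith
    have hB : (0:ℝ) < (y:ℝ)*θ - (q:ℝ) := by linarith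
    have h2 : (y:ℝ)*((y:ℝ)*θ - q) < (x:ℝ)*((y:ℝ)*θ - q) := mul_lt_mul_of_pos_right hyxR hB
    have hy1R : (1:ℝ) ≤ (y:ℝ) := by exact_mod_cast hy1
    nlinarith [h2, hdetR, hA, hB, hy1R]
  have hceil : ⌈((x - y : ℕ) : ℝ) * θ⌉ = p - q := by
    rw [Int.ceil_eq_iff]
    constructor
    · rw [hcastR]
      push_cast
      nlinarith
    · rw [hcastR]
      push_cast
      nlinarith
  have hx'1 : 1 ≤ x - y := by omega
  have hx'N : x - y ≤ N - y := by omega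
  have hxgtNy : (N : ℤ) - y < x := by omega
  refine ⟨hx'1, hx'N, ?_, ?_⟩
  · -- minimality
    intro c' h1 h2
    rw [hceil]
    by_contra hcon
    push_neg at hcon
    set c := ⌈(c' : ℝ) * θ⌉ with hc
    have hcq : 1 ≤ c * y - q * c' := by
      have hcu : (c' : ℝ) * θ < c := irr_lt_ceil hθ c' h1
      have hc'R : (0 : ℝ) < (c' : ℝ) := by exact_mod_cast h1
      have : (0 : ℝ) < (c : ℝ) * y - q * c' := by nlinarith
      have h' : (0 : ℤ) < c * y - q * c' := by exact_mod_cast this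
      omega
    have hlt : 1 ≤ (p - q) * c' - c * ((x : ℤ) - y) := by
      rw [← hcast]; omega
    have hid : (c' : ℤ) = (y : ℤ) * ((p - q) * c' - c * ((x : ℤ) - y)) +
        ((x : ℤ) - y) * (c * y - q * c') := by
      linear_combination (-(c' : ℤ)) * hdet
    have hyz : (0 : ℤ) < (y : ℤ) := by exact_mod_cast hy1
    have hxyz : (0 : ℤ) < (x : ℤ) - y := by
      have : (y : ℤ) < x := by exact_mod_cast hyx
      omega
    have hge : (c' : ℤ) ≥ (y : ℤ) + ((x : ℤ) - y) := by nlinarith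
    have hc'le : (c' : ℤ) ≤ (N : ℤ) - y := by
      have h2' : (c' : ℤ) ≤ ((N - y : ℕ) : ℤ) := by exact_mod_cast h2
      have hyNz : (y : ℤ) ≤ (N : ℤ) := by exact_mod_cast hyN
      omega
    omega
  · -- coprimality
    rw [hceil, hcast]
    exact ⟨y, -q, by linear_combination hdet⟩

lemma pinListAux_spec (θ : ℝ) : ∀ (fuel M : ℕ), M ≤ fuel →
    ∀ i, i < (pinListAux θ fuel M).length →
      ((pinListAux θ fuel M).take i).sum < M ∧
      (pinListAux θ fuel M)[i]? =
        some (pinStep θ (M - ((pinListAux θ fuel M).take i).sum)) := by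
  intro fuel
  induction fuel with
  | zero =>
    intro M h i hi
    simp [pinListAux] at hi
  | succ fuel ih =>
    intro M hMf i hi
    by_cases hM0 : M = 0
    · subst hM0
      simp [pinListAux] at hi
    · have hM : 1 ≤ M := by omega
      obtain ⟨hs1, hs2⟩ := pinStep_pos_le θ M hM
      have hun : pinListAux θ (fuel + 1) M =
          pinStep θ M :: pinListAux θ fuel (M - pinStep θ M) := by
        rw [pinListAux]; simp [hM0]
      rw [hun] at hi ⊢
      match i with
      | 0 =>
        refine ⟨by simp; omega, ?_⟩
        simp
      | Nat.succ j =>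
        have hj : j < (pinListAux θ fuel (M - pinStep θ M)).length := by
          simpa using hi
        obtain ⟨h1, h2⟩ := ih (M - pinStep θ M) (by omega) j hj
        rw [List.take_succ_cons, List.sum_cons]
        have harith : M - (pinStep θ M + (List.take j (pinListAux θ fuel (M - pinStep θ M))).sum)
            = M - pinStep θ M - (List.take j (pinListAux θ fuel (M - pinStep θ M))).sum := by
          omega
        refine ⟨by omega, ?_⟩
        rw [List.getElem?_cons_succ, harith]
        exact h2

lemma pinList_headI (θ : ℝ) (M : ℕ) (hM : 1 ≤ M) :
    (pinList θ M).headI = pinStep θ M := by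
  obtain ⟨M', rfl⟩ : ∃ M', M = M' + 1 := ⟨M - 1, by omega⟩
  rw [pinList, pinListAux]
  simp

/-- with `a₁` the first entry of `P^in_θ(M)`, `b` the outgoing
partition `P^out_θ(M)`, and `m` minimal with `∑_{j≤m} bⱼ ≥ a₁`, one has
`δ_θ(a₁ − ∑_{j<n} bⱼ, bₙ) = 1` for each `1 ≤ n ≤ m`, where
`δ_θ(x,y) = y⌈xθ⌉ − x⌊yθ⌋`. -/
theorem delta_theta_eq_one (θ : ℝ) (hθ : Irrational θ) (M : ℕ) (hM : 1 ≤ M) (m : ℕ)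
    (hml : m ≤ (poutList θ M).length)
    (hm1 : (pinList θ M).headI ≤ (((poutList θ M).take m).sum))
    (hm2 : ∀ m' < m, (((poutList θ M).take m').sum) < (pinList θ M).headI) :
    ∀ n : ℕ, 1 ≤ n → n ≤ m →
      ((poutList θ M).getD (n - 1) 0 : ℤ) *
          ⌈((((pinList θ M).headI : ℤ) - (((poutList θ M).take (n - 1)).sum : ℤ) : ℤ) : ℝ) * θ⌉ -
        (((pinList θ M).headI : ℤ) - (((poutList θ M).take (n - 1)).sum : ℤ)) *
          ⌊(((poutList θ M).getD (n - 1) 0 : ℕ) : ℝ) * θ⌋ = 1 := by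
  intro n hn1 hnm
  have hθ' : Irrational (-θ) := hθ.neg
  set a₁ := pinStep θ M with ha₁def
  have hhead : (pinList θ M).headI = a₁ := pinList_headI θ M hM
  rw [hhead] at hm1 hm2 ⊢
  set L := poutList θ M with hLdef
  have hLeq : L = pinListAux (-θ) M M := rfl
  have hspec : ∀ i, i < L.length →
      ((L.take i).sum < M ∧
        L[i]? = some (pinStep (-θ) (M - (L.take i).sum))) := by
    intro i hi
    have := pinListAux_spec (-θ) M M le_rfl i (by rw [hLeq] at hi; exact hi)
    rw [← hLeq] at this
    exact this
  -- the invariant, by induction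
  have key : ∀ k, k < m → InvU θ (M - (L.take k).sum) (a₁ - (L.take k).sum) := by
    intro k
    induction k with
    | zero =>
      intro _
      simpa using pinStep_invU θ hθ M hM
    | succ k ihk =>
      intro hk
      have hk' : k < m := by omega
      have hinv := ihk hk'
      have hkl : k < L.length := lt_of_lt_of_le hk' hml
      obtain ⟨hsum, hget⟩ := hspec k hkl
      set S := (L.take k).sum with hSdef
      set y := pinStep (-θ) (M - S) with hydef
      have hMS : 1 ≤ M - S := by omega
      have hyinv : InvU (-θ) (M - S) y := pinStep_invU (-θ) hθ' (M - S) hMS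
      have hgetk : L.get ⟨k, hkl⟩ = y := by
        have h := List.getElem?_eq_getElem hkl
        rw [h] at hget
        exact Option.some_injective _ hget
      have hgetk' : L[k] = y := hgetk
      have hsumsucc : (L.take (k + 1)).sum = S + y := by
        rw [List.sum_take_succ L k hkl, hgetk']
      have hlt : S + y < a₁ := by rw [← hsumsucc]; exact hm2 (k + 1) hk
      have hSa : S < a₁ := hm2 k hk'
      have hyx : y < a₁ - S := by omega
      have hstep := stepInvU θ hθ (M - S) (a₁ - S) y hinv hyinv hyx
      have hy1 : 1 ≤ y := (pinStep_pos_le (-θ) (M - S) hMS).1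
      have hyM : y ≤ M - S := (pinStep_pos_le (-θ) (M - S) hMS).2
      have e1 : M - (L.take (k + 1)).sum = (M - S) - y := by rw [hsumsucc]; omega
      have e2 : a₁ - (L.take (k + 1)).sum = (a₁ - S) - y := by rw [hsumsucc]; omega
      rw [e1, e2]
      exact hstep
  -- apply the Farey lemma at index n - 1
  have hk : n - 1 < m := by omega
  have hinv := key (n - 1) hk
  have hkl : n - 1 < L.length := lt_of_lt_of_le hk hml
  obtain ⟨hsum, hget⟩ := hspec (n - 1) hkl
  set S := (L.take (n - 1)).sum with hSdef
  set y := pinStep (-θ) (M - S) with hydef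
  have hMS : 1 ≤ M - S := by omega
  have hyinv : InvU (-θ) (M - S) y := pinStep_invU (-θ) hθ' (M - S) hMS
  obtain ⟨hdet, _⟩ := farey θ hθ (M - S) (a₁ - S) y hinv hyinv
  have hSa : S < a₁ := hm2 (n - 1) hk
  have hgetD : L.getD (n - 1) 0 = y := by
    rw [List.getD_eq_getElem?_getD, hget]
    rfl
  rw [hgetD]
  have hcast : (((a₁ - S : ℕ)) : ℤ) = (a₁ : ℤ) - (S : ℤ) := by omega
  have hcastR : (((a₁ : ℤ) - (S : ℤ) : ℤ) : ℝ) = ((a₁ - S : ℕ) : ℝ) := by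
    rw [← hcast]
    push_cast
    ring
  rw [hcastR]
  rw [← hcast]
  linarith [hdet]
end

section
/- Let γ be a nondegenerate elliptic Reeb orbit with monodromy angle θ (irrational), so that CZ_τ(γ^m) = 2⌊mθ⌋ + 1 for each positive integer m. Let u be a degree-M branched cover of the cylinder over γ with connected genus-g domain, positive ends of multiplicities a₁,…,a_k and negative ends of multiplicities b₁,…,b_l (∑aᵢ = ∑bⱼ = M). Then the Fredholm index ind(u) = −χ(C) + ∑ᵢ CZ_τ(γ^{aᵢ}) − ∑ⱼ CZ_τ(γ^{bⱼ}) satisfies ind(u) = 2g + 2(∑ᵢ⌈aᵢθ⌉ − ∑ⱼ⌊bⱼθ⌋ − 1). In particular ind(u) ≥ 0, with equality only if g = 0. -/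
open Finset

lemma irr_ceil_eq_floor_add_one {x : ℝ} (hx : Irrational x) : ⌈x⌉ = ⌊x⌋ + 1 := by
  have h1 : (⌊x⌋ : ℝ) ≠ x := fun h => hx.ne_int ⌊x⌋ h.symm
  have h2 : (⌊x⌋ : ℝ) < x := lt_of_le_of_ne (Int.floor_le x) h1
  have h3 : x < ⌊x⌋ + 1 := Int.lt_floor_add_one x
  refine le_antisymm (Int.ceil_le.mpr (by push_cast; linarith)) ?_
  have : (⌊x⌋ : ℝ) < ⌈x⌉ := lt_of_lt_of_le h2 (Int.le_ceil x)
  exact_mod_cast this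

/-- for a connected genus-`g` branched cover of a cylinder over an
elliptic orbit with monodromy angle `θ`, with positive ends of multiplicities
`a₁,…,a_k` and negative ends `b₁,…,b_l` (each summing to `M`), the Fredholm index
`ind = −χ + ∑ CZ(aᵢ) − ∑ CZ(bⱼ)`, with `χ = 2−2g−k−l` and `CZ(m) = 2⌊mθ⌋+1`,
satisfies `ind = 2g + 2(∑⌈aᵢθ⌉ − ∑⌊bⱼθ⌋ − 1)`; in particular `ind ≥ 0`, with
equality only if `g = 0`. -/
theorem branched_cover_index (θ : ℝ) (hθ : Irrational θ) (g k l M : ℕ)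
    (hk : 1 ≤ k) (hl : 1 ≤ l)
    (a : Fin k → ℕ) (b : Fin l → ℕ) (ha : ∀ i, 0 < a i) (hb : ∀ j, 0 < b j)
    (hsa : ∑ i, a i = M) (hsb : ∑ j, b j = M) :
    (-(2 - 2 * (g : ℤ) - (k : ℤ) - (l : ℤ)) +
        (∑ i, (2 * ⌊(a i : ℝ) * θ⌋ + 1)) - (∑ j, (2 * ⌊(b j : ℝ) * θ⌋ + 1))
      = 2 * (g : ℤ) + 2 * ((∑ i, ⌈(a i : ℝ) * θ⌉) - (∑ j, ⌊(b j : ℝ) * θ⌋) - 1)) ∧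
    (0 ≤ -(2 - 2 * (g : ℤ) - (k : ℤ) - (l : ℤ)) +
        (∑ i, (2 * ⌊(a i : ℝ) * θ⌋ + 1)) - (∑ j, (2 * ⌊(b j : ℝ) * θ⌋ + 1))) ∧
    ((-(2 - 2 * (g : ℤ) - (k : ℤ) - (l : ℤ)) +
        (∑ i, (2 * ⌊(a i : ℝ) * θ⌋ + 1)) - (∑ j, (2 * ⌊(b j : ℝ) * θ⌋ + 1)) = 0) →
      g = 0) := by
  have hM : 0 < M := by
    rw [← hsa]
    exact sum_pos (fun i _ => ha i) (univ_nonempty_iff.mpr ⟨⟨0, hk⟩⟩)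
  -- ceil = floor + 1 for each a i
  have hceil : ∀ i, ⌈(a i : ℝ) * θ⌉ = ⌊(a i : ℝ) * θ⌋ + 1 := fun i =>
    irr_ceil_eq_floor_add_one (hθ.natCast_mul (ha i).ne')
  have hMirr : Irrational ((M : ℝ) * θ) := hθ.natCast_mul hM.ne'
  -- identity
  have hid : (-(2 - 2 * (g : ℤ) - (k : ℤ) - (l : ℤ)) +
        (∑ i, (2 * ⌊(a i : ℝ) * θ⌋ + 1)) - (∑ j, (2 * ⌊(b j : ℝ) * θ⌋ + 1))
      = 2 * (g : ℤ) + 2 * ((∑ i, ⌈(a i : ℝ) * θ⌉) - (∑ j, ⌊(b j : ℝ) * θ⌋) - 1)) := by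
    have h1 : (∑ i, ⌈(a i : ℝ) * θ⌉) = (∑ i, ⌊(a i : ℝ) * θ⌋) + k := by
      rw [sum_congr rfl (fun i _ => hceil i), sum_add_distrib]
      simp
    have e1 : (∑ i, (2 * ⌊(a i : ℝ) * θ⌋ + 1)) = 2 * (∑ i, ⌊(a i : ℝ) * θ⌋) + k := by
      rw [sum_add_distrib, ← mul_sum]; simp
    have e2 : (∑ j, (2 * ⌊(b j : ℝ) * θ⌋ + 1)) = 2 * (∑ j, ⌊(b j : ℝ) * θ⌋) + l := by
      rw [sum_add_distrib, ← mul_sum]; simp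
    rw [h1, e1, e2]
    ring
  refine ⟨hid, ?_, ?_⟩
  · -- nonnegativity
    have hbsum : (∑ j, ⌊(b j : ℝ) * θ⌋) ≤ ⌊(M : ℝ) * θ⌋ := by
      apply Int.le_floor.mpr
      push_cast
      rw [← hsb]
      push_cast
      rw [sum_mul]
      exact sum_le_sum (fun j _ => Int.floor_le _)
    have hasum : ⌈(M : ℝ) * θ⌉ ≤ ∑ i, ⌈(a i : ℝ) * θ⌉ := by
      apply Int.ceil_le.mpr
      push_cast
      rw [← hsa]
      push_cast
      rw [sum_mul]
      exact sum_le_sum (fun i _ => Int.le_ceil _)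
    have hMc : ⌈(M : ℝ) * θ⌉ = ⌊(M : ℝ) * θ⌋ + 1 := irr_ceil_eq_floor_add_one hMirr
    rw [hid]
    have : (0:ℤ) ≤ (g : ℤ) := Int.natCast_nonneg g
    omega
  · -- equality implies g = 0
    intro h0
    rw [hid] at h0
    have hbsum : (∑ j, ⌊(b j : ℝ) * θ⌋) ≤ ⌊(M : ℝ) * θ⌋ := by
      apply Int.le_floor.mpr
      push_cast
      rw [← hsb]
      push_cast
      rw [sum_mul]
      exact sum_le_sum (fun j _ => Int.floor_le _)
    have hasum : ⌈(M : ℝ) * θ⌉ ≤ ∑ i, ⌈(a i : ℝ) * θ⌉ := by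
      apply Int.ceil_le.mpr
      push_cast
      rw [← hsa]
      push_cast
      rw [sum_mul]
      exact sum_le_sum (fun i _ => Int.le_ceil _)
    have hMc : ⌈(M : ℝ) * θ⌉ = ⌊(M : ℝ) * θ⌋ + 1 := irr_ceil_eq_floor_add_one hMirr
    have : (0:ℤ) ≤ (g : ℤ) := Int.natCast_nonneg g
    omega
end
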